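/- arXiv:math/0006105 — 2 statements merged into one kernel-verified Lean document; each statement's English description precedes it below -/
import Mathlib

section
/- Each nonzero coset of the root lattice ℤR in the weight lattice X of an irreducible root system is represented by a unique minuscule fundamental weight; consequently the order of the fundamental group X/ℤR equals 1 + (number of minuscule fundamental weights). -/
open scoped BigOperators

/-- The ambient Euclidean space of rank `n`. -/
abbrev EV (n : ℕ) : Type := EuclideanSpace ℝ (Fin n)

/-- The inner product `⟨x, y⟩` on `EV n`. -/
noncomputable def ip {n : ℕ} (x y : EV n) : ℝ := inner ℝ x y

/-- The pairing `⟨x, α∨⟩ = 2⟨x, α⟩/⟨α, α⟩` of a vector with the coroot of `α`. -/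
noncomputable def pairing {n : ℕ} (x α : EV n) : ℝ := 2 * ip x α / ip α α

/-- The coroot `α∨ = 2α/⟨α,α⟩`. -/
noncomputable def coroot {n : ℕ} (α : EV n) : EV n := (2 / ip α α) • α

/-- The subgroup of the affine transformation group consisting of (generated by)
all translations `t(v)`, `v ∈ L`. -/
noncomputable def transOf {n : ℕ} (L : AddSubgroup (EV n)) : Subgroup (EV n ≃ᵃ[ℝ] EV n) :=
  Subgroup.closure {g | ∃ v ∈ L, ∀ x, g x = x + v}

/-- The lattice `l·L`. -/
noncomputable def smulLat {n : ℕ} (l : ℕ) (L : AddSubgroup (EV n)) : AddSubgroup (EV n) :=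
  AddSubgroup.map (AddMonoidHom.mk' (fun v => (l : ℝ) • v) (fun a b => smul_add _ a b)) L

/-- An abstract reduced crystallographic **irreducible root system** of rank `n`,
realized in Euclidean space, together with a choice of positive roots and of
simple roots. -/
structure RootSystemData (n : ℕ) where
  /-- the set of roots -/
  Φ : Finset (EV n)
  /-- the positive roots `R⁺` -/
  pos : Finset (EV n)
  /-- the simple roots -/
  simple : Fin n → EV n
  zero_not_mem : (0 : EV n) ∉ Φ
  span_top : Submodule.span ℝ (Φ : Set (EV n)) = ⊤
  neg_mem : ∀ α ∈ Φ, -α ∈ Φ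
  pair_int : ∀ α ∈ Φ, ∀ β ∈ Φ, ∃ k : ℤ, pairing α β = (k : ℝ)
  reflect_mem : ∀ α ∈ Φ, ∀ β ∈ Φ, α - pairing α β • β ∈ Φ
  reduced : ∀ α ∈ Φ, (2 : ℝ) • α ∉ Φ
  pos_subset : pos ⊆ Φ
  pos_iff : ∀ α ∈ Φ, (α ∈ pos ↔ -α ∉ pos)
  simple_mem_pos : ∀ i, simple i ∈ pos
  pos_sum : ∀ α ∈ pos, ∃ c : Fin n → ℕ, α = ∑ i, (c i : ℝ) • simple i
  irred : ∀ s : Finset (EV n), s ⊆ Φ → s.Nonempty →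
    (∀ α ∈ s, ∀ β ∈ Φ, ip α β ≠ 0 → β ∈ s) → s = Φ

namespace RootSystemData

variable {n : ℕ} (P : RootSystemData n)

/-- `ρ`, half the sum of the positive roots. -/
noncomputable def rho : EV n := (2⁻¹ : ℝ) • ∑ α ∈ P.pos, α

/-- The Coxeter number `h = |Φ| / rank`. -/
def cox : ℕ := P.Φ.card / n

/-- `ϖ` is the fundamental dominant weight attached to the simple root `α_i`. -/
def IsFundWeight (i : Fin n) (ϖ : EV n) : Prop :=
  ∀ j, pairing ϖ (P.simple j) = if j = i then 1 else 0

/-- The root lattice `ℤR`. -/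
noncomputable def rootLattice : AddSubgroup (EV n) :=
  AddSubgroup.closure (P.Φ : Set (EV n))

/-- The weight lattice `X = {x | ⟨x, α∨⟩ ∈ ℤ for all roots α}`. -/
noncomputable def weightLattice : AddSubgroup (EV n) where
  carrier := {x | ∀ α ∈ P.Φ, ∃ k : ℤ, pairing x α = (k : ℝ)}
  zero_mem' := by
    intro α _
    exact ⟨0, by simp [pairing, ip]⟩
  add_mem' := by
    intro x y hx hy α hα
    obtain ⟨k₁, h₁⟩ := hx α hα
    obtain ⟨k₂, h₂⟩ := hy α hα
    refine ⟨k₁ + k₂, ?_⟩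
    have h : pairing (x + y) α = pairing x α + pairing y α := by
      simp only [pairing, ip, inner_add_left]
      ring
    rw [h, h₁, h₂]
    push_cast
    ring
  neg_mem' := by
    intro x hx α hα
    obtain ⟨k, h⟩ := hx α hα
    refine ⟨-k, ?_⟩
    have h' : pairing (-x) α = -pairing x α := by
      simp only [pairing, ip, inner_neg_left]
      ring
    rw [h', h]
    push_cast
    ring

/-- `x` is a dominant vector. -/
def Dominant (x : EV n) : Prop := ∀ i, 0 ≤ pairing x (P.simple i)

/-- The dominance order: `x ≤ y` iff `y - x` is a nonnegative integral
combination of the simple roots. -/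
def DomLE (x y : EV n) : Prop :=
  ∃ c : Fin n → ℕ, y - x = ∑ i, (c i : ℝ) • P.simple i

/-- `ϖ` is a minuscule weight: a nonzero dominant weight such that every dominant
weight `x ≤ ϖ` equals `ϖ`. -/
def Minuscule (ϖ : EV n) : Prop :=
  ϖ ≠ 0 ∧ ϖ ∈ P.weightLattice ∧ P.Dominant ϖ ∧
    ∀ x ∈ P.weightLattice, P.Dominant x → P.DomLE x ϖ → x = ϖ

/-- `ϖ` is the minuscule fundamental weight attached to the simple root `α_i`. -/
def MinusculeFundWeight (i : Fin n) (ϖ : EV n) : Prop :=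
  P.IsFundWeight i ϖ ∧ P.Minuscule ϖ

/-- `α₀` is the dominant (=highest) short root; its coroot is the highest coroot. -/
def IsDominantShortRoot (α₀ : EV n) : Prop :=
  α₀ ∈ P.pos ∧ (∀ β ∈ P.Φ, ip α₀ α₀ ≤ ip β β) ∧ P.Dominant α₀

/-- The value `d(x) = ∏_{α > 0} ⟨x + ρ, α∨⟩ / ⟨ρ, α∨⟩` of Weyl's degree formula. -/
noncomputable def weylDeg (x : EV n) : ℝ :=
  ∏ α ∈ P.pos, (pairing (x + P.rho) α / pairing P.rho α)

/-- The positive roots `R_i⁺` of the subsystem `R_i` spanned by the simple roots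
other than `α_i`. -/
def posIn (i : Fin n) : Set (EV n) :=
  {α | α ∈ P.pos ∧ α ∈ Submodule.span ℝ (P.simple '' {j | j ≠ i})}

/-- The finite Weyl group `W`, generated by the reflections `s_α`, viewed inside
the group of affine transformations of `EV n`. -/
noncomputable def weyl : Subgroup (EV n ≃ᵃ[ℝ] EV n) :=
  Subgroup.closure {g | ∃ α ∈ P.Φ, ∀ x, g x = x - pairing x α • coroot α}

/-- The parabolic subgroup `W_i` of `W` generated by the simple reflections `s_j`, `j ≠ i`. -/
noncomputable def weylParab (i : Fin n) : Subgroup (EV n ≃ᵃ[ℝ] EV n) :=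
  Subgroup.closure {g | ∃ j, j ≠ i ∧ ∀ x,
    g x = x - pairing x (P.simple j) • coroot (P.simple j)}

/-- The affine Weyl group `W_l`, generated by the affine reflections `s_{α, lk}`
in the hyperplanes `{x | ⟨x, α∨⟩ = lk}`, `α ∈ Φ`, `k ∈ ℤ`. -/
noncomputable def affWeyl (l : ℕ) : Subgroup (EV n ≃ᵃ[ℝ] EV n) :=
  Subgroup.closure {g | ∃ α ∈ P.Φ, ∃ k : ℤ,
    ∀ x, g x = x - (pairing x α - l * k) • coroot α}

/-- The extended affine Weyl group `Ŵ_l`, generated by `W` and the translations `t(lX)`. -/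
noncomputable def extAffWeyl (l : ℕ) : Subgroup (EV n ≃ᵃ[ℝ] EV n) :=
  P.weyl ⊔ transOf (smulLat l P.weightLattice)

/-- The lowest alcove `C_l = {x | 0 < ⟨x + ρ, α∨⟩ < l for all α ∈ R⁺}`. -/
noncomputable def lowAlcove (l : ℕ) : Set (EV n) :=
  {x | ∀ α ∈ P.pos, 0 < pairing (x + P.rho) α ∧ pairing (x + P.rho) α < l}

/-- The orbit of `0` under the dot action `w • x = w(x + ρ) - ρ` of a subgroup `H`
of the affine transformation group. -/
noncomputable def dotOrbitZero (H : Subgroup (EV n ≃ᵃ[ℝ] EV n)) : Set (EV n) :=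
  {v | ∃ w ∈ H, w P.rho - P.rho = v}

end RootSystemData

section Aux

open Finset

variable {n : ℕ} (P : RootSystemData n)

/-! ### Inner product basics -/

lemma ip_comm (x y : EV n) : ip x y = ip y x := real_inner_comm y x

lemma ip_add_left (x y z : EV n) : ip (x + y) z = ip x z + ip y z := inner_add_left x y z

lemma ip_sub_left (x y z : EV n) : ip (x - y) z = ip x z - ip y z := inner_sub_left x y z

lemma ip_sub_right (x y z : EV n) : ip x (y - z) = ip x y - ip x z := inner_sub_right x y z

lemma ip_smul_left (c : ℝ) (x y : EV n) : ip (c • x) y = c * ip x y := real_inner_smul_left x y c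

lemma ip_smul_right (c : ℝ) (x y : EV n) : ip x (c • y) = c * ip x y := real_inner_smul_right x y c

lemma ip_sum_left {ι : Type*} (s : Finset ι) (f : ι → EV n) (y : EV n) :
    ip (∑ i ∈ s, f i) y = ∑ i ∈ s, ip (f i) y := sum_inner s f y

lemma ip_sum_right {ι : Type*} (s : Finset ι) (f : ι → EV n) (y : EV n) :
    ip y (∑ i ∈ s, f i) = ∑ i ∈ s, ip y (f i) := inner_sum s f y

lemma ip_self_nonneg (x : EV n) : 0 ≤ ip x x := real_inner_self_nonneg

lemma ip_self_eq_zero {x : EV n} : ip x x = 0 ↔ x = 0 := inner_self_eq_zero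

lemma ip_zero_left (y : EV n) : ip 0 y = 0 := inner_zero_left y

lemma ip_self_eq_norm_sq (x : EV n) : ip x x = ‖x‖ ^ 2 := real_inner_self_eq_norm_sq x

namespace RootSystemData

lemma root_ne_zero {α : EV n} (h : α ∈ P.Φ) : α ≠ 0 := fun h0 => P.zero_not_mem (h0 ▸ h)

lemma ip_root_pos {α : EV n} (h : α ∈ P.Φ) : 0 < ip α α := by
  have h0 : α ≠ 0 := P.root_ne_zero h
  have h1 : ip α α ≠ 0 := inner_self_ne_zero.2 h0
  have h2 : 0 ≤ ip α α := real_inner_self_nonneg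
  exact lt_of_le_of_ne h2 (Ne.symm h1)

lemma simple_mem_Φ (i : Fin n) : P.simple i ∈ P.Φ := P.pos_subset (P.simple_mem_pos i)

lemma ip_simple_pos (i : Fin n) : 0 < ip (P.simple i) (P.simple i) :=
  P.ip_root_pos (P.simple_mem_Φ i)

/-- `⟨x, α⟩ = pairing x α * ⟨α,α⟩ / 2` -/
lemma ip_eq_pairing_mul {x α : EV n} (hα : α ∈ P.Φ) :
    ip x α = pairing x α * ip α α / 2 := by
  have h := P.ip_root_pos hα
  unfold pairing
  field_simp

lemma pairing_nonneg_iff {x : EV n} (i : Fin n) :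
    0 ≤ pairing x (P.simple i) ↔ 0 ≤ ip x (P.simple i) := by
  have h := P.ip_simple_pos i
  unfold pairing
  constructor
  · intro hp
    rcases div_nonneg_iff.1 hp with ⟨h1, _⟩ | ⟨_, h2⟩
    · linarith
    · linarith
  · intro hip
    positivity

lemma dominant_ip_nonneg {x : EV n} (hx : P.Dominant x) (i : Fin n) :
    0 ≤ ip x (P.simple i) := (P.pairing_nonneg_iff i).1 (hx i)

/-- membership in the weight lattice, restricted to simple roots -/
lemma weight_pairing_int {x : EV n} (hx : x ∈ P.weightLattice) (i : Fin n) :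
    ∃ k : ℤ, pairing x (P.simple i) = (k : ℝ) := hx (P.simple i) (P.simple_mem_Φ i)

/-! ### Span and linear independence of the simple roots -/

lemma pos_mem_span {α : EV n} (h : α ∈ P.pos) :
    α ∈ Submodule.span ℝ (Set.range P.simple) := by
  obtain ⟨c, hc⟩ := P.pos_sum α h
  rw [hc]
  exact Submodule.sum_mem _ fun i _ =>
    Submodule.smul_mem _ _ (Submodule.subset_span ⟨i, rfl⟩)

lemma neg_pos_of_not_pos {α : EV n} (hΦ : α ∈ P.Φ) (h : α ∉ P.pos) : -α ∈ P.pos := by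
  have := P.pos_iff (-α) (P.neg_mem α hΦ)
  rw [this, neg_neg]
  exact fun h' => h h'

lemma root_mem_span {α : EV n} (h : α ∈ P.Φ) :
    α ∈ Submodule.span ℝ (Set.range P.simple) := by
  by_cases hp : α ∈ P.pos
  · exact P.pos_mem_span hp
  · have := P.pos_mem_span (P.neg_pos_of_not_pos h hp)
    simpa using Submodule.neg_mem _ this

lemma span_simple_top : Submodule.span ℝ (Set.range P.simple) = ⊤ := by
  refine top_unique ?_
  rw [← P.span_top]
  rw [Submodule.span_le]
  intro α hα
  exact P.root_mem_span hα

lemma linIndep : LinearIndependent ℝ P.simple := by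
  apply linearIndependent_of_top_le_span_of_card_eq_finrank
  · rw [P.span_simple_top]
  · simp [finrank_euclideanSpace_fin]

lemma coeff_unique {m m' : Fin n → ℝ}
    (h : ∑ i, m i • P.simple i = ∑ i, m' i • P.simple i) : m = m' := by
  funext i
  have h2 : ∑ i, (m i - m' i) • P.simple i = 0 := by
    simp only [sub_smul, Finset.sum_sub_distrib, h, sub_self]
  have := Fintype.linearIndependent_iff.1 P.linIndep _ h2 i
  linarith

lemma eq_zero_of_ip_simple {w : EV n} (h : ∀ i, ip w (P.simple i) = 0) : w = 0 := by
  have hspan : ∀ u ∈ Submodule.span ℝ (Set.range P.simple), ip w u = 0 := by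
    intro u hu
    induction hu using Submodule.span_induction with
    | mem u hu => obtain ⟨i, rfl⟩ := hu; exact h i
    | zero => simp [ip]
    | add u v _ _ hu hv =>
        rw [show ip w (u + v) = ip w u + ip w v from inner_add_right w u v, hu, hv, add_zero]
    | smul c u _ hu => rw [ip_smul_right, hu, mul_zero]
  have : ip w w = 0 := hspan w (by rw [P.span_simple_top]; trivial)
  exact ip_self_eq_zero.1 this

/-! ### The root lattice -/

lemma mem_rootLattice_iff {x : EV n} :
    x ∈ P.rootLattice ↔ ∃ m : Fin n → ℤ, x = ∑ i, (m i : ℝ) • P.simple i := by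
  constructor
  · intro hx
    induction hx using AddSubgroup.closure_induction with
    | mem α hα =>
        by_cases hp : α ∈ P.pos
        · obtain ⟨c, hc⟩ := P.pos_sum α hp
          exact ⟨fun i => (c i : ℤ), by rw [hc]; push_cast; rfl⟩
        · obtain ⟨c, hc⟩ := P.pos_sum _ (P.neg_pos_of_not_pos hα hp)
          refine ⟨fun i => -(c i : ℤ), ?_⟩
          have : α = -∑ i, (c i : ℝ) • P.simple i := by rw [← hc]; simp
          rw [this, ← Finset.sum_neg_distrib]
          congr 1; funext i; push_cast; rw [neg_smul]
    | zero => exact ⟨0, by simp⟩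
    | add x y hx hy ihx ihy =>
        obtain ⟨m, hm⟩ := ihx; obtain ⟨m', hm'⟩ := ihy
        refine ⟨m + m', ?_⟩
        rw [hm, hm', ← Finset.sum_add_distrib]
        congr 1; funext i
        simp only [Pi.add_apply, Int.cast_add, add_smul]
    | neg x hx ihx =>
        obtain ⟨m, hm⟩ := ihx
        refine ⟨-m, ?_⟩
        rw [hm, ← Finset.sum_neg_distrib]
        congr 1; funext i
        simp only [Pi.neg_apply, Int.cast_neg, neg_smul]
  · rintro ⟨m, rfl⟩
    refine AddSubgroup.sum_mem _ fun i _ => ?_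
    rw [Int.cast_smul_eq_zsmul]
    exact AddSubgroup.zsmul_mem _ (AddSubgroup.subset_closure (by exact_mod_cast P.simple_mem_Φ i)) _

lemma simple_mem_rootLattice (i : Fin n) : P.simple i ∈ P.rootLattice :=
  AddSubgroup.subset_closure (by exact_mod_cast P.simple_mem_Φ i)

lemma rootLattice_le_weightLattice : P.rootLattice ≤ P.weightLattice := by
  rw [RootSystemData.rootLattice, AddSubgroup.closure_le]
  intro α hα β hβ
  exact P.pair_int α (by exact_mod_cast hα) β hβ

lemma smul_simple_mem_rootLattice (k : ℤ) (i : Fin n) :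
    (k : ℝ) • P.simple i ∈ P.rootLattice := by
  rw [Int.cast_smul_eq_zsmul]
  exact AddSubgroup.zsmul_mem _ (P.simple_mem_rootLattice i) _

lemma nsmul_simple_mem_rootLattice (k : ℕ) (i : Fin n) :
    (k : ℝ) • P.simple i ∈ P.rootLattice := by
  have := P.smul_simple_mem_rootLattice (k : ℤ) i
  push_cast at this
  exact this

/-! ### Obtuseness of distinct simple roots -/

lemma strict_cauchy {x y : EV n} (hy : y ≠ 0) (hxy : ∀ t : ℝ, x ≠ t • y) :
    ip x y * ip x y < ip x x * ip y y := by
  have hyy : 0 < ip y y :=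
    lt_of_le_of_ne real_inner_self_nonneg (Ne.symm (inner_self_ne_zero.2 hy))
  set t : ℝ := ip x y / ip y y with ht_def
  have hz : x - t • y ≠ 0 := by
    intro h
    exact hxy t (by rwa [sub_eq_zero] at h)
  have hzz : 0 < ip (x - t • y) (x - t • y) :=
    lt_of_le_of_ne real_inner_self_nonneg (Ne.symm (inner_self_ne_zero.2 hz))
  have hexp : ip (x - t • y) (x - t • y)
      = ip x x - t * ip x y - t * ip x y + t * t * ip y y := by
    simp only [ip_sub_left, ip_sub_right, ip_smul_left, ip_smul_right, ip_comm y x]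
    ring
  have ht : t * ip y y = ip x y := by
    rw [ht_def]; field_simp
  nlinarith [hzz, hexp, ht, hyy]

lemma sum_indicator (i : Fin n) :
    ∑ k, (if k = i then (1 : ℝ) else 0) • P.simple k = P.simple i := by
  simp [ite_smul]

lemma simple_not_smul {i j : Fin n} (hij : i ≠ j) (t : ℝ) : P.simple i ≠ t • P.simple j := by
  intro h
  have h2 : ∑ k, (if k = i then (1 : ℝ) else 0) • P.simple k
      = ∑ k, (if k = j then t else 0) • P.simple k := by
    rw [P.sum_indicator i, h]
    symm
    simp [ite_smul]
  have h3 := congrFun (P.coeff_unique h2) i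
  simp [hij] at h3

lemma sum_indicator_sub (i j : Fin n) :
    ∑ m, ((if m = i then (1 : ℝ) else 0) - (if m = j then 1 else 0)) • P.simple m
      = P.simple i - P.simple j := by
  simp only [sub_smul, Finset.sum_sub_distrib, P.sum_indicator]

lemma ip_simple_nonpos {i j : Fin n} (hij : i ≠ j) :
    ip (P.simple i) (P.simple j) ≤ 0 := by
  by_contra hcon
  push_neg at hcon
  set a := P.simple i with ha_def
  set b := P.simple j with hb_def
  have ha : a ∈ P.Φ := P.simple_mem_Φ i
  have hb : b ∈ P.Φ := P.simple_mem_Φ j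
  have hda : 0 < ip a a := P.ip_root_pos ha
  have hdb : 0 < ip b b := P.ip_root_pos hb
  obtain ⟨k, hk⟩ := P.pair_int a ha b hb
  obtain ⟨k', hk'⟩ := P.pair_int b hb a ha
  have hkpos : 0 < (k : ℝ) := by rw [← hk]; unfold pairing; positivity
  have hk'pos : 0 < (k' : ℝ) := by
    rw [← hk']
    unfold pairing
    rw [ip_comm b a]
    positivity
  have hk1 : 1 ≤ k := by exact_mod_cast hkpos
  have hk'1 : 1 ≤ k' := by exact_mod_cast hk'pos
  have hcs : ip a b * ip a b < ip a a * ip b b :=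
    strict_cauchy (P.root_ne_zero hb) (P.simple_not_smul hij)
  have hprod : (k : ℝ) * (k' : ℝ) < 4 := by
    rw [← hk, ← hk']
    unfold pairing
    rw [ip_comm b a, div_mul_div_comm, div_lt_iff₀ (by positivity)]
    nlinarith [hcs]
  have hcase : k = 1 ∨ k' = 1 := by
    by_contra hc
    push_neg at hc
    have h2 : 2 ≤ k := by omega
    have h2' : 2 ≤ k' := by omega
    have h4 : (4 : ℤ) ≤ k * k' := by nlinarith
    have h4' : (4 : ℝ) ≤ (k : ℝ) * (k' : ℝ) := by exact_mod_cast h4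
    linarith
  have hroot : a - b ∈ P.Φ := by
    rcases hcase with h1 | h1
    · have h5 := P.reflect_mem a ha b hb
      rw [hk, h1] at h5
      simpa using h5
    · have h5 := P.reflect_mem b hb a ha
      rw [hk', h1] at h5
      simp only [Int.cast_one, one_smul] at h5
      have h6 := P.neg_mem _ h5
      simpa using h6
  by_cases hp : a - b ∈ P.pos
  · obtain ⟨c, hc⟩ := P.pos_sum _ hp
    have h2 : ∑ m, ((if m = i then (1 : ℝ) else 0) - (if m = j then 1 else 0)) • P.simple m
        = ∑ m, (fun m => ((c m : ℝ))) m • P.simple m := by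
      rw [P.sum_indicator_sub i j, ← hc]
    have h3 := congrFun (P.coeff_unique h2) j
    have h4 : (0 : ℝ) ≤ (c j : ℝ) := Nat.cast_nonneg _
    simp [hij, Ne.symm hij] at h3
    rw [← h3] at h4
    linarith
  · have hbma : b - a ∈ P.pos := by
      have h5 := P.neg_pos_of_not_pos hroot hp
      rwa [neg_sub] at h5
    obtain ⟨c, hc⟩ := P.pos_sum _ hbma
    have h2 : ∑ m, ((if m = j then (1 : ℝ) else 0) - (if m = i then 1 else 0)) • P.simple m
        = ∑ m, (fun m => ((c m : ℝ))) m • P.simple m := by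
      rw [P.sum_indicator_sub j i, ← hc]
    have h3 := congrFun (P.coeff_unique h2) i
    have h4 : (0 : ℝ) ≤ (c i : ℝ) := Nat.cast_nonneg _
    simp [hij, Ne.symm hij] at h3
    rw [← h3] at h4
    linarith

/-! ### Finiteness of bounded sets of weights -/

lemma finite_weights_bdd (R : ℝ) :
    {y : EV n | y ∈ P.weightLattice ∧ ‖y‖ ≤ R}.Finite := by
  classical
  set S := {y : EV n | y ∈ P.weightLattice ∧ ‖y‖ ≤ R} with hS
  set M : Fin n → ℤ := fun j => ⌈2 * R * ‖P.simple j‖ / ip (P.simple j) (P.simple j)⌉ with hM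
  set g : EV n → (Fin n → ℤ) := fun y j => ⌊pairing y (P.simple j)⌋ with hg
  have key : ∀ y ∈ S, ∀ j, ((g y j : ℝ) = pairing y (P.simple j)) := by
    intro y hy j
    obtain ⟨k, hk⟩ := P.weight_pairing_int hy.1 j
    simp [hg, hk]
  have hinj : Set.InjOn g S := by
    intro y hy y' hy' hgy
    have hipeq : ∀ j, ip (y - y') (P.simple j) = 0 := by
      intro j
      have e1 : pairing y (P.simple j) = pairing y' (P.simple j) := by
        rw [← key y hy j, ← key y' hy' j, hgy]
      have e2 : ip y (P.simple j) = ip y' (P.simple j) := by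
        rw [P.ip_eq_pairing_mul (x := y) (P.simple_mem_Φ j),
          P.ip_eq_pairing_mul (x := y') (P.simple_mem_Φ j), e1]
      rw [ip_sub_left, e2, sub_self]
    have h0 := P.eq_zero_of_ip_simple hipeq
    exact sub_eq_zero.1 h0
  have habs : ∀ y ∈ S, ∀ j, |g y j| ≤ M j := by
    intro y hy j
    have hd := P.ip_simple_pos j
    have h1 : |ip y (P.simple j)| ≤ R * ‖P.simple j‖ := by
      calc |ip y (P.simple j)| ≤ ‖y‖ * ‖P.simple j‖ := abs_real_inner_le_norm _ _
        _ ≤ R * ‖P.simple j‖ := mul_le_mul_of_nonneg_right hy.2 (norm_nonneg _)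
    have h3 : |2 * ip y (P.simple j)| ≤ 2 * R * ‖P.simple j‖ := by
      rw [abs_mul]
      norm_num
      nlinarith [h1, abs_nonneg (ip y (P.simple j))]
    have h2 : |(g y j : ℝ)| ≤ (M j : ℝ) := by
      rw [key y hy j]
      unfold pairing
      calc |2 * ip y (P.simple j) / ip (P.simple j) (P.simple j)|
          = |2 * ip y (P.simple j)| / ip (P.simple j) (P.simple j) := by
            rw [abs_div, abs_of_pos hd]
        _ ≤ 2 * R * ‖P.simple j‖ / ip (P.simple j) (P.simple j) := by gcongr
        _ ≤ (M j : ℝ) := Int.le_ceil _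
    exact_mod_cast h2
  have himg : (g '' S).Finite := by
    apply Set.Finite.subset (Set.finite_Icc (fun j => -M j) M)
    rintro _ ⟨y, hy, rfl⟩
    rw [Set.mem_Icc]
    refine ⟨?_, ?_⟩ <;> rw [Pi.le_def] <;> intro j
    · exact (abs_le.1 (habs y hy j)).1
    · exact (abs_le.1 (habs y hy j)).2
  exact Set.Finite.of_finite_image himg hinj

/-! ### A bounded representative of each coset -/

lemma exists_bdd_rep (x : EV n) :
    ∃ y : EV n, x - y ∈ P.rootLattice ∧ ‖y‖ ≤ ∑ i, ‖P.simple i‖ := by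
  classical
  set b := Module.Basis.mk P.linIndep (by rw [P.span_simple_top]) with hb
  set c : Fin n → ℝ := fun i => b.repr x i with hc
  refine ⟨∑ i, Int.fract (c i) • P.simple i, ?_, ?_⟩
  · have hx : x = ∑ i, c i • P.simple i := by
      conv_lhs => rw [← b.sum_repr x]
      congr 1
      funext i
      rw [hb, Module.Basis.mk_apply]
    have hsub : x - ∑ i, Int.fract (c i) • P.simple i = ∑ i, ((⌊c i⌋ : ℝ)) • P.simple i := by
      rw [hx, ← Finset.sum_sub_distrib]
      congr 1
      funext i
      rw [← sub_smul, Int.self_sub_fract]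
    rw [hsub]
    exact P.mem_rootLattice_iff.2 ⟨fun i => ⌊c i⌋, rfl⟩
  · calc ‖∑ i, Int.fract (c i) • P.simple i‖ ≤ ∑ i, ‖Int.fract (c i) • P.simple i‖ :=
        norm_sum_le _ _
      _ ≤ ∑ i, ‖P.simple i‖ := by
        apply Finset.sum_le_sum
        intro i _
        rw [norm_smul, Real.norm_eq_abs, abs_of_nonneg (Int.fract_nonneg _)]
        nlinarith [Int.fract_lt_one (c i), Int.fract_nonneg (c i), norm_nonneg (P.simple i)]

/-! ### A vector pairing to `1` with every simple root -/

lemma exists_v : ∃ v : EV n, ∀ i, ip v (P.simple i) = 1 := by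
  let T : EV n →ₗ[ℝ] (Fin n → ℝ) :=
    { toFun := fun y => fun j => ip y (P.simple j)
      map_add' := by intro a b'; funext j; exact ip_add_left a b' _
      map_smul' := by intro r a; funext j; exact ip_smul_left r a _ }
  have hinj : Function.Injective T := by
    intro a b' hab
    have h0 : ∀ j, ip (a - b') (P.simple j) = 0 := by
      intro j
      have := congrFun hab j
      rw [ip_sub_left]
      simp only [T, LinearMap.coe_mk, AddHom.coe_mk] at this
      rw [this, sub_self]
    have := P.eq_zero_of_ip_simple h0
    exact sub_eq_zero.1 this
  have hsurj : Function.Surjective T :=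
    (LinearMap.injective_iff_surjective_of_finrank_eq_finrank
      (by simp [finrank_euclideanSpace_fin, Module.finrank_pi])).1 hinj
  obtain ⟨v, hv⟩ := hsurj (fun _ => 1)
  exact ⟨v, fun i => congrFun hv i⟩

/-! ### The minimal-norm dominant representative -/

lemma coset_mem_weightLattice {x z : EV n} (hx : x ∈ P.weightLattice)
    (hz : x - z ∈ P.rootLattice) : z ∈ P.weightLattice := by
  have h1 := P.rootLattice_le_weightLattice hz
  have h2 : z = x - (x - z) := by abel
  rw [h2]
  exact AddSubgroup.sub_mem _ hx h1

lemma exists_min_dom_rep {x : EV n} (hx : x ∈ P.weightLattice) :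
    ∃ y : EV n, x - y ∈ P.rootLattice ∧ P.Dominant y ∧
      ∀ z : EV n, x - z ∈ P.rootLattice → ‖y‖ ≤ ‖z‖ := by
  classical
  have hxx : x - x ∈ P.rootLattice := by rw [sub_self]; exact AddSubgroup.zero_mem _
  have hS1fin : ({z : EV n | x - z ∈ P.rootLattice ∧ ‖z‖ ≤ ‖x‖}).Finite :=
    (P.finite_weights_bdd ‖x‖).subset
      (fun z hz => ⟨P.coset_mem_weightLattice hx hz.1, hz.2⟩)
  obtain ⟨y₀, hy₀S, hy₀min⟩ := Set.exists_min_image _ (fun z => ‖z‖) hS1fin ⟨x, hxx, le_refl _⟩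
  have hy₀glob : ∀ z, x - z ∈ P.rootLattice → ‖y₀‖ ≤ ‖z‖ := by
    intro z hz
    by_cases h : ‖z‖ ≤ ‖x‖
    · exact hy₀min z ⟨hz, h⟩
    · push_neg at h
      exact le_trans (hy₀min x ⟨hxx, le_refl _⟩) h.le
  have hS2fin : ({z : EV n | x - z ∈ P.rootLattice ∧ ‖z‖ = ‖y₀‖}).Finite :=
    (P.finite_weights_bdd ‖y₀‖).subset
      (fun z hz => ⟨P.coset_mem_weightLattice hx hz.1, le_of_eq hz.2⟩)
  obtain ⟨v, hv⟩ := P.exists_v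
  obtain ⟨y, hyS, hymax⟩ := Set.exists_max_image _ (fun z => ip v z) hS2fin ⟨y₀, hy₀S.1, rfl⟩
  have hymin : ∀ z : EV n, x - z ∈ P.rootLattice → ‖y‖ ≤ ‖z‖ := by
    intro z hz
    rw [hyS.2]
    exact hy₀glob z hz
  refine ⟨y, hyS.1, ?_, hymin⟩
  intro i
  by_contra hneg
  push_neg at hneg
  set cR := pairing y (P.simple i) with hcR
  obtain ⟨k, hk⟩ := P.weight_pairing_int (P.coset_mem_weightLattice hx hyS.1) i
  set y' := y - cR • P.simple i with hy'
  have hy'C : x - y' ∈ P.rootLattice := by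
    have he : x - y' = (x - y) + cR • P.simple i := by rw [hy']; abel
    rw [he]
    refine AddSubgroup.add_mem _ hyS.1 ?_
    rw [hcR, hk]
    exact P.smul_simple_mem_rootLattice k i
  have hd := P.ip_simple_pos i
  have hcd : cR * ip (P.simple i) (P.simple i) = 2 * ip y (P.simple i) := by
    rw [hcR]; unfold pairing; field_simp
  have hipeq : ip y' y' = ip y y := by
    simp only [hy', ip_sub_left, ip_sub_right, ip_smul_left, ip_smul_right,
      ip_comm (P.simple i) y]
    nlinarith [hcd]
  have hnorm : ‖y'‖ = ‖y‖ := by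
    have h1 : ‖y'‖ ^ 2 = ‖y‖ ^ 2 := by
      rw [← ip_self_eq_norm_sq, ← ip_self_eq_norm_sq, hipeq]
    nlinarith [norm_nonneg y', norm_nonneg y]
  have hy'S : y' ∈ {z : EV n | x - z ∈ P.rootLattice ∧ ‖z‖ = ‖y₀‖} :=
    ⟨hy'C, hnorm.trans hyS.2⟩
  have hle := hymax y' hy'S
  have hipv : ip v y' = ip v y - cR := by
    rw [hy', ip_sub_right, ip_smul_right, hv i, mul_one]
  rw [hipv] at hle
  linarith

lemma min_shift_ineq {x y w : EV n} (hyC : x - y ∈ P.rootLattice)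
    (hymin : ∀ z : EV n, x - z ∈ P.rootLattice → ‖y‖ ≤ ‖z‖)
    (hw : w ∈ P.rootLattice) : 2 * ip y w ≤ ip w w := by
  have hz : x - (y - w) ∈ P.rootLattice := by
    have he : x - (y - w) = (x - y) + w := by abel
    rw [he]
    exact AddSubgroup.add_mem _ hyC hw
  have hn := hymin (y - w) hz
  have hnsq : ip y y ≤ ip (y - w) (y - w) := by
    rw [ip_self_eq_norm_sq, ip_self_eq_norm_sq]
    nlinarith [norm_nonneg (y - w), norm_nonneg y]
  have hexp : ip (y - w) (y - w) = ip y y - 2 * ip y w + ip w w := by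
    simp only [ip_sub_left, ip_sub_right, ip_comm w y]
    ring
  linarith

/-! ### The minimal representative is dominated by every dominant coset member -/

lemma dom_rep_le {x y lam : EV n} (hyC : x - y ∈ P.rootLattice)
    (hymin : ∀ z : EV n, x - z ∈ P.rootLattice → ‖y‖ ≤ ‖z‖)
    (hlamC : x - lam ∈ P.rootLattice) (hdom : P.Dominant lam) :
    P.DomLE y lam := by
  classical
  have hdC : lam - y ∈ P.rootLattice := by
    have he : lam - y = (x - y) - (x - lam) := by abel
    rw [he]
    exact AddSubgroup.sub_mem _ hyC hlamC
  obtain ⟨m, hm⟩ := P.mem_rootLattice_iff.1 hdC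
  set p : Fin n → ℕ := fun i => (m i).toNat with hp
  set q : Fin n → ℕ := fun i => (-(m i)).toNat with hq
  have hpq : ∀ i, ((m i : ℝ)) = (p i : ℝ) - (q i : ℝ) := by
    intro i
    have h0 : (p i : ℤ) - (q i : ℤ) = m i := by simp only [hp, hq]; omega
    exact_mod_cast h0.symm
  have hpq0 : ∀ i, (p i : ℝ) * (q i : ℝ) = 0 := by
    intro i
    have h0 : p i = 0 ∨ q i = 0 := by simp only [hp, hq]; omega
    rcases h0 with h0 | h0 <;> simp [h0]
  set dm : EV n := ∑ i, (q i : ℝ) • P.simple i with hdm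
  set dp : EV n := ∑ i, (p i : ℝ) • P.simple i with hdp
  have hsplit : lam - y = dp - dm := by
    rw [hm, hdp, hdm, ← Finset.sum_sub_distrib]
    congr 1
    funext i
    rw [← sub_smul, ← hpq i]
  have hdmlat : dm ∈ P.rootLattice :=
    AddSubgroup.sum_mem _ (fun i _ => P.nsmul_simple_mem_rootLattice (q i) i)
  have h1 : ip dp dm ≤ 0 := by
    rw [hdp, ip_sum_left]
    apply Finset.sum_nonpos
    intro i _
    rw [ip_smul_left, hdm, ip_sum_right, Finset.mul_sum]
    apply Finset.sum_nonpos
    intro j _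
    rw [ip_smul_right]
    by_cases hij : i = j
    · subst hij
      rw [show (p i : ℝ) * ((q i : ℝ) * ip (P.simple i) (P.simple i))
          = ((p i : ℝ) * (q i : ℝ)) * ip (P.simple i) (P.simple i) by ring, hpq0 i, zero_mul]
    · have hob := P.ip_simple_nonpos hij
      have hp0 : (0:ℝ) ≤ (p i : ℝ) := Nat.cast_nonneg _
      have hq0 : (0:ℝ) ≤ (q j : ℝ) := Nat.cast_nonneg _
      exact mul_nonpos_of_nonneg_of_nonpos hp0 (mul_nonpos_of_nonneg_of_nonpos hq0 hob)
  have h2 : 0 ≤ ip lam dm := by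
    rw [hdm, ip_sum_right]
    apply Finset.sum_nonneg
    intro i _
    rw [ip_smul_right]
    exact mul_nonneg (Nat.cast_nonneg _) (P.dominant_ip_nonneg hdom i)
  have h3 : 2 * ip y dm ≤ ip dm dm := P.min_shift_ineq hyC hymin hdmlat
  have h4 : ip dm dm ≤ 0 := by
    have e2 : ip dm lam - ip dm y = ip dm dp - ip dm dm := by
      rw [← ip_sub_right, hsplit, ip_sub_right]
    have c1 : ip dm dp ≤ 0 := by rw [ip_comm]; exact h1
    have c2 : 0 ≤ ip dm lam := by rw [ip_comm]; exact h2
    have c3 : 2 * ip dm y ≤ ip dm dm := by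
      rw [show ip dm y = ip y dm from ip_comm dm y]
      exact h3
    linarith
  have hdm0 : dm = 0 := ip_self_eq_zero.1 (le_antisymm h4 (ip_self_nonneg dm))
  refine ⟨p, ?_⟩
  rw [hsplit, hdm0, sub_zero, hdp]

/-! ### The minimal dominant representative is minuscule (if nonzero) -/

lemma min_rep_minuscule {x y : EV n} (hx : x ∈ P.weightLattice)
    (hyC : x - y ∈ P.rootLattice) (hdom : P.Dominant y)
    (hymin : ∀ z : EV n, x - z ∈ P.rootLattice → ‖y‖ ≤ ‖z‖) (hy0 : y ≠ 0) :
    P.Minuscule y := by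
  refine ⟨hy0, P.coset_mem_weightLattice hx hyC, hdom, ?_⟩
  intro z hz hdomz hle
  obtain ⟨c, hc⟩ := hle
  set d : EV n := ∑ i, (c i : ℝ) • P.simple i with hd
  have hyz : y - z = d := hc
  have hdlat : d ∈ P.rootLattice :=
    AddSubgroup.sum_mem _ (fun i _ => P.nsmul_simple_mem_rootLattice (c i) i)
  have h2 : 0 ≤ ip d z := by
    rw [hd, ip_sum_left]
    apply Finset.sum_nonneg
    intro i _
    rw [ip_smul_left]
    refine mul_nonneg (Nat.cast_nonneg _) ?_
    rw [ip_comm]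
    exact P.dominant_ip_nonneg hdomz i
  have e : ip d y - ip d z = ip d d := by
    rw [← ip_sub_right, hyz]
  have c3 : 2 * ip d y ≤ ip d d := by
    rw [show ip d y = ip y d from ip_comm d y]
    exact P.min_shift_ineq hyC hymin hdlat
  have h4 : ip d d ≤ 0 := by linarith
  have hd0 : d = 0 := ip_self_eq_zero.1 (le_antisymm h4 (ip_self_nonneg d))
  have : y - z = 0 := by rw [hyz, hd0]
  exact (sub_eq_zero.1 this).symm

lemma minuscule_eq_min_rep {x w y : EV n} (hx : x ∈ P.weightLattice)
    (hw : P.Minuscule w) (hwC : x - w ∈ P.rootLattice)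
    (hyC : x - y ∈ P.rootLattice) (hdom : P.Dominant y)
    (hymin : ∀ z : EV n, x - z ∈ P.rootLattice → ‖y‖ ≤ ‖z‖) : w = y := by
  have hle : P.DomLE y w := P.dom_rep_le hyC hymin hwC hw.2.2.1
  exact (hw.2.2.2 y (P.coset_mem_weightLattice hx hyC) hdom hle).symm

lemma dominant_zero : P.Dominant (0 : EV n) := by
  intro i
  simp [pairing, ip]

lemma minuscule_not_mem_rootLattice {w : EV n} (hw : P.Minuscule w) :
    w ∉ P.rootLattice := by
  intro hmem
  have hx : w ∈ P.weightLattice := hw.2.1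
  have hww : w - w ∈ P.rootLattice := by rw [sub_self]; exact AddSubgroup.zero_mem _
  have h0 : w - (0 : EV n) ∈ P.rootLattice := by rwa [sub_zero]
  have hmin0 : ∀ z : EV n, w - z ∈ P.rootLattice → ‖(0 : EV n)‖ ≤ ‖z‖ := by
    intro z _
    simp [norm_nonneg]
  exact hw.1 (P.minuscule_eq_min_rep hx hw hww h0 P.dominant_zero hmin0)

lemma minuscule_min_norm {w : EV n} (hw : P.Minuscule w) :
    ∀ z : EV n, w - z ∈ P.rootLattice → ‖w‖ ≤ ‖z‖ := by
  obtain ⟨y, hyC, hdom, hymin⟩ := P.exists_min_dom_rep hw.2.1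
  have hww : w - w ∈ P.rootLattice := by rw [sub_self]; exact AddSubgroup.zero_mem _
  have hwy : w = y := P.minuscule_eq_min_rep hw.2.1 hw hww hyC hdom hymin
  intro z hz
  rw [hwy]
  exact hymin z hz

lemma minuscule_finite : {w : EV n | P.Minuscule w}.Finite := by
  apply (P.finite_weights_bdd (∑ i, ‖P.simple i‖)).subset
  intro w hw
  refine ⟨hw.2.1, ?_⟩
  obtain ⟨y, hyC, hyB⟩ := P.exists_bdd_rep w
  exact le_trans (P.minuscule_min_norm hw y hyC) hyB

lemma part1 {x : EV n} (hx : x ∈ P.weightLattice) (hxn : x ∉ P.rootLattice) :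
    ∃! w : EV n, P.Minuscule w ∧ x - w ∈ P.rootLattice := by
  obtain ⟨y, hyC, hdom, hymin⟩ := P.exists_min_dom_rep hx
  have hy0 : y ≠ 0 := by
    rintro rfl
    rw [sub_zero] at hyC
    exact hxn hyC
  refine ⟨y, ⟨P.min_rep_minuscule hx hyC hdom hymin hy0, hyC⟩, ?_⟩
  rintro w ⟨hw, hwC⟩
  exact P.minuscule_eq_min_rep hx hw hwC hyC hdom hymin

end RootSystemData

end Aux

/-- Each nonzero coset of the root lattice `ℤR` in the weight
lattice `X` is represented by a unique minuscule weight; consequently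
`|X/ℤR| = 1 + #(minuscule weights)`. -/
theorem coset_unique_minuscule_rep_and_card
    {n : ℕ} (hn : 1 ≤ n) (P : RootSystemData n) :
    (∀ x ∈ P.weightLattice, x ∉ P.rootLattice →
      ∃! ϖ : EV n, P.Minuscule ϖ ∧ x - ϖ ∈ P.rootLattice) ∧
    Nat.card (P.weightLattice ⧸ P.rootLattice.addSubgroupOf P.weightLattice) =
      1 + Nat.card {ϖ : EV n // P.Minuscule ϖ} := by
  classical
  refine ⟨fun x hx hxn => P.part1 hx hxn, ?_⟩
  set Q := (P.weightLattice ⧸ P.rootLattice.addSubgroupOf P.weightLattice) with hQ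
  haveI hfinM : Finite {w : EV n // P.Minuscule w} := P.minuscule_finite.to_subtype
  let f : {w : EV n // P.Minuscule w} → Q :=
    fun w => QuotientAddGroup.mk ⟨w.1, w.2.2.1⟩
  have hf0 : ∀ w, f w ≠ 0 := by
    intro w h
    rw [QuotientAddGroup.eq_zero_iff, AddSubgroup.mem_addSubgroupOf] at h
    exact P.minuscule_not_mem_rootLattice w.2 h
  let g : {w : EV n // P.Minuscule w} → {q : Q // q ≠ 0} := fun w => ⟨f w, hf0 w⟩
  have hg_bij : Function.Bijective g := by
    constructor
    · intro w1 w2 h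
      have h2 : f w1 = f w2 := congrArg Subtype.val h
      rw [QuotientAddGroup.eq, AddSubgroup.mem_addSubgroupOf] at h2
      have h3 : w2.1 - w1.1 ∈ P.rootLattice := by
        have h4 : ((-(⟨w1.1, w1.2.2.1⟩ : P.weightLattice)
            + (⟨w2.1, w2.2.2.1⟩ : P.weightLattice) : P.weightLattice) : EV n)
            = w2.1 - w1.1 := by
          push_cast
          abel
        rwa [h4] at h2
      have hx1 : w1.1 ∈ P.weightLattice := w1.2.2.1
      have hxn : w1.1 ∉ P.rootLattice := P.minuscule_not_mem_rootLattice w1.2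
      obtain ⟨u, _, huniq⟩ := P.part1 hx1 hxn
      have e1 : w1.1 = u :=
        huniq _ ⟨w1.2, by rw [sub_self]; exact AddSubgroup.zero_mem _⟩
      have e2 : w2.1 = u := by
        refine huniq _ ⟨w2.2, ?_⟩
        have h5 : w1.1 - w2.1 = -(w2.1 - w1.1) := by abel
        rw [h5]
        exact AddSubgroup.neg_mem _ h3
      exact Subtype.ext (e1.trans e2.symm)
    · rintro ⟨q, hq⟩
      obtain ⟨a, rfl⟩ := QuotientAddGroup.mk'_surjective _ q
      have hxw : (a : EV n) ∈ P.weightLattice := a.2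
      have hxn : (a : EV n) ∉ P.rootLattice := by
        intro h
        apply hq
        rw [QuotientAddGroup.mk'_apply, QuotientAddGroup.eq_zero_iff,
          AddSubgroup.mem_addSubgroupOf]
        exact h
      obtain ⟨w, ⟨hwmin, hwC⟩, _⟩ := P.part1 hxw hxn
      refine ⟨⟨w, hwmin⟩, Subtype.ext ?_⟩
      show f ⟨w, hwmin⟩ = (QuotientAddGroup.mk' (P.rootLattice.addSubgroupOf P.weightLattice)) a
      have hfw : f ⟨w, hwmin⟩ = QuotientAddGroup.mk (⟨w, hwmin.2.1⟩ : P.weightLattice) := rfl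
      rw [hfw, QuotientAddGroup.mk'_apply, QuotientAddGroup.eq, AddSubgroup.mem_addSubgroupOf]
      have h6 : ((-(⟨w, hwmin.2.1⟩ : P.weightLattice) + a : P.weightLattice) : EV n)
          = (a : EV n) - w := by
        push_cast
        abel
      rw [h6]
      exact hwC
  let e : {w : EV n // P.Minuscule w} ≃ {q : Q // q ≠ 0} := Equiv.ofBijective g hg_bij
  haveI hfinNZ : Finite {q : Q // q ≠ 0} := Finite.of_equiv _ e
  haveI hsub : Subsingleton {q : Q // q = 0} :=
    ⟨fun a b => Subtype.ext (a.2.trans b.2.symm)⟩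
  haveI hfinZ : Finite {q : Q // q = 0} := Finite.of_subsingleton
  have hcong : Nat.card Q = Nat.card {q : Q // q = 0} + Nat.card {q : Q // q ≠ 0} := by
    rw [← Nat.card_sum]
    exact (Nat.card_congr (Equiv.sumCompl (fun q : Q => q = 0))).symm
  have h0 : Nat.card {q : Q // q = 0} = 1 := by
    haveI : Unique {q : Q // q = 0} := ⟨⟨⟨0, rfl⟩⟩, fun a => Subtype.ext a.2⟩
    exact Nat.card_unique
  rw [hcong, h0, Nat.card_congr e]
end

section
/- For each k with 1 ≤ k ≤ h−1, there exists at least one positive root α ∈ R⁺ \ R_i⁺ with ⟨ρ, α∨⟩ = k, where ϖ_i is a minuscule fundamental weight and R_i is the subsystem generated by simple roots other than α_i. -/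
open scoped BigOperators

namespace MinusculeAux

open RootSystemData Finset

variable {n : ℕ}

noncomputable local instance : DecidableEq (EV n) := Classical.decEq _

/-! ### Inner product and pairing basics -/

lemma ip_comm (x y : EV n) : ip x y = ip y x := real_inner_comm y x

lemma ip_self_nonneg (x : EV n) : 0 ≤ ip x x := real_inner_self_nonneg

lemma ip_self_pos {x : EV n} (hx : x ≠ 0) : 0 < ip x x := by
  rcases lt_or_eq_of_le (ip_self_nonneg x) with h | h
  · exact h
  · exact absurd (inner_self_eq_zero.mp h.symm) hx

lemma ip_add_left (x y z : EV n) : ip (x + y) z = ip x z + ip y z :=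
  inner_add_left x y z

lemma ip_sub_left (x y z : EV n) : ip (x - y) z = ip x z - ip y z :=
  inner_sub_left x y z

lemma ip_neg_left (x y : EV n) : ip (-x) y = -ip x y := inner_neg_left x y

lemma ip_smul_left (c : ℝ) (x y : EV n) : ip (c • x) y = c * ip x y :=
  real_inner_smul_left x y c

lemma ip_smul_right (c : ℝ) (x y : EV n) : ip x (c • y) = c * ip x y :=
  real_inner_smul_right x y c

lemma ip_sub_right (x y z : EV n) : ip x (y - z) = ip x y - ip x z :=
  inner_sub_right x y z

lemma ip_add_right (x y z : EV n) : ip x (y + z) = ip x y + ip x z :=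
  inner_add_right x y z

lemma ip_neg_right (x y : EV n) : ip x (-y) = -ip x y := inner_neg_right x y

lemma ip_zero_left (x : EV n) : ip 0 x = 0 := inner_zero_left x

lemma ip_sum_left {ι : Type*} (s : Finset ι) (f : ι → EV n) (y : EV n) :
    ip (∑ a ∈ s, f a) y = ∑ a ∈ s, ip (f a) y :=
  sum_inner s f y

lemma ip_sum_right {ι : Type*} (s : Finset ι) (f : ι → EV n) (y : EV n) :
    ip y (∑ a ∈ s, f a) = ∑ a ∈ s, ip y (f a) :=
  inner_sum s f y

lemma pairing_def (x α : EV n) : pairing x α = 2 * ip x α / ip α α := rfl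

lemma pairing_self {α : EV n} (hα : α ≠ 0) : pairing α α = 2 := by
  have h := ip_self_pos hα
  rw [pairing_def]; field_simp

lemma pairing_smul_left (c : ℝ) (x α : EV n) : pairing (c • x) α = c * pairing x α := by
  rw [pairing_def, pairing_def, ip_smul_left]; ring

lemma pairing_add_left (x y α : EV n) : pairing (x + y) α = pairing x α + pairing y α := by
  rw [pairing_def, pairing_def, pairing_def, ip_add_left]; ring

lemma pairing_sub_left (x y α : EV n) : pairing (x - y) α = pairing x α - pairing y α := by
  rw [pairing_def, pairing_def, pairing_def, ip_sub_left]; ring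

lemma pairing_neg_left (x α : EV n) : pairing (-x) α = -pairing x α := by
  rw [pairing_def, pairing_def, ip_neg_left]; ring

lemma pairing_neg_neg (x α : EV n) : pairing (-x) (-α) = pairing x α := by
  simp only [pairing_def, ip, inner_neg_neg]

lemma pairing_pos_iff {x α : EV n} (hα : 0 < ip α α) : 0 < pairing x α ↔ 0 < ip x α := by
  rw [pairing_def]
  constructor
  · intro h
    rcases div_pos_iff.mp h with ⟨h1, _⟩ | ⟨_, h2⟩
    · linarith
    · linarith
  · intro h
    positivity

lemma pairing_nonneg_iff {x α : EV n} (hα : 0 < ip α α) : 0 ≤ pairing x α ↔ 0 ≤ ip x α := by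
  rw [pairing_def]
  constructor
  · intro h
    by_contra h'
    push_neg at h'
    have : 2 * ip x α / ip α α < 0 := div_neg_of_neg_of_pos (by linarith) hα
    linarith
  · intro h; positivity

lemma pairing_eq_zero_iff {x α : EV n} (hα : 0 < ip α α) : pairing x α = 0 ↔ ip x α = 0 := by
  rw [pairing_def]
  constructor
  · intro h
    have := div_eq_zero_iff.mp h
    rcases this with h' | h'
    · linarith
    · linarith
  · intro h; rw [h]; simp

/-! ### Root system basics -/

variable (P : RootSystemData n)

lemma root_ne_zero {α : EV n} (h : α ∈ P.Φ) : α ≠ 0 := fun h0 => P.zero_not_mem (h0 ▸ h)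

lemma root_ipsq_pos {α : EV n} (h : α ∈ P.Φ) : 0 < ip α α := ip_self_pos (root_ne_zero P h)

lemma pos_root_mem {α : EV n} (h : α ∈ P.pos) : α ∈ P.Φ := P.pos_subset h

lemma neg_mem_pos_of_not_pos {α : EV n} (hα : α ∈ P.Φ) (h : α ∉ P.pos) : -α ∈ P.pos := by
  by_contra h'
  exact h ((P.pos_iff α hα).mpr h')

lemma not_pos_of_neg_pos {α : EV n} (hα : α ∈ P.Φ) (h : -α ∈ P.pos) : α ∉ P.pos := by
  intro hp
  exact (P.pos_iff α hα).mp hp h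

lemma simple_mem {j : Fin n} : P.simple j ∈ P.Φ := P.pos_subset (P.simple_mem_pos j)

lemma simple_ne_zero (j : Fin n) : P.simple j ≠ 0 := root_ne_zero P (simple_mem P)

lemma simple_ipsq_pos (j : Fin n) : 0 < ip (P.simple j) (P.simple j) :=
  root_ipsq_pos P (simple_mem P)

/-! ### The basis of simple roots -/

lemma simple_span_top : ⊤ ≤ Submodule.span ℝ (Set.range P.simple) := by
  rw [← P.span_top]
  apply Submodule.span_le.mpr
  intro α hα
  have hα' : α ∈ P.Φ := hα
  have key : ∀ β ∈ P.pos, β ∈ Submodule.span ℝ (Set.range P.simple) := by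
    intro β hβ
    obtain ⟨c, hc⟩ := P.pos_sum β hβ
    rw [hc]
    exact Submodule.sum_mem _ fun j _ =>
      Submodule.smul_mem _ _ (Submodule.subset_span (Set.mem_range_self j))
  by_cases h : α ∈ P.pos
  · exact key α h
  · have := key (-α) (neg_mem_pos_of_not_pos P hα' h)
    simpa using Submodule.neg_mem _ this

noncomputable def B : Module.Basis (Fin n) ℝ (EV n) :=
  basisOfTopLeSpanOfCardEqFinrank P.simple (simple_span_top P)
    ((Fintype.card_fin n).trans finrank_euclideanSpace_fin.symm)

lemma B_eq (j : Fin n) : B P j = P.simple j := by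
  rw [B, coe_basisOfTopLeSpanOfCardEqFinrank]

/-- The coordinates of a vector in the basis of simple roots. -/
noncomputable def cd (x : EV n) (j : Fin n) : ℝ := (B P).repr x j

lemma cd_sum (c : Fin n → ℝ) (j : Fin n) : cd P (∑ k, c k • P.simple k) j = c j := by
  have : (∑ k, c k • P.simple k) = ∑ k, c k • B P k := by
    simp [B_eq]
  rw [cd, this, Module.Basis.repr_sum_self]

lemma cd_neg (x : EV n) (j : Fin n) : cd P (-x) j = -cd P x j := by
  simp [cd]

lemma cd_sub (x y : EV n) (j : Fin n) : cd P (x - y) j = cd P x j - cd P y j := by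
  simp [cd]

lemma cd_smul (c : ℝ) (x : EV n) (j : Fin n) : cd P (c • x) j = c * cd P x j := by
  simp [cd]

lemma cd_simple (k j : Fin n) : cd P (P.simple k) j = if k = j then 1 else 0 := by
  have : P.simple k = B P k := (B_eq P k).symm
  rw [cd, this, Module.Basis.repr_self]
  simp [Finsupp.single_apply]

lemma eq_sum_cd (x : EV n) : x = ∑ j, cd P x j • P.simple j := by
  conv_lhs => rw [← (B P).sum_repr x]
  congr 1
  ext j
  rw [B_eq, cd]

lemma pos_cd_nonneg {β : EV n} (hβ : β ∈ P.pos) (j : Fin n) : 0 ≤ cd P β j := by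
  obtain ⟨c, hc⟩ := P.pos_sum β hβ
  rw [hc, cd_sum]
  positivity

lemma pos_cd_exists_pos {β : EV n} (hβ : β ∈ P.pos) : ∃ j, 0 < cd P β j := by
  by_contra h
  push_neg at h
  have hz : β = 0 := by
    have h0 : ∀ j, cd P β j = 0 := fun j => le_antisymm (h j) (pos_cd_nonneg P hβ j)
    rw [eq_sum_cd P β]
    simp [h0]
  exact root_ne_zero P (pos_root_mem P hβ) hz

lemma mem_pos_of_cd_pos {β : EV n} (hβ : β ∈ P.Φ) {j : Fin n} (h : 0 < cd P β j) :
    β ∈ P.pos := by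
  by_cases hp : β ∈ P.pos
  · exact hp
  · exfalso
    have hneg := neg_mem_pos_of_not_pos P hβ hp
    have := pos_cd_nonneg P hneg j
    rw [cd_neg] at this
    linarith

end MinusculeAux

namespace MinusculeAux

open RootSystemData Finset

variable {n : ℕ} (P : RootSystemData n)

/-! ### Parallel roots, strict Cauchy-Schwarz, string lemma -/

lemma pairing_smul_left_root (r : ℝ) (γ : EV n) (hγ : γ ≠ 0) :
    pairing (r • γ) γ = 2 * r := by
  rw [pairing_def, ip_smul_left]
  have := ip_self_pos hγ
  field_simp

lemma pairing_root_smul (r : ℝ) (γ : EV n) (hr : r ≠ 0) (hγ : γ ≠ 0) :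
    pairing γ (r • γ) = 2 / r := by
  rw [pairing_def, ip_smul_right]
  have h2 : ip (r • γ) (r • γ) = r * (r * ip γ γ) := by
    rw [ip_smul_left, ip_smul_right]
  rw [h2, ip_comm]
  have := ip_self_pos hγ
  field_simp

lemma eq_or_eq_neg_of_smul {β γ : EV n} (hβ : β ∈ P.Φ) (hγ : γ ∈ P.Φ) {r : ℝ}
    (h : β = r • γ) : β = γ ∨ β = -γ := by
  have hγ0 : γ ≠ 0 := root_ne_zero P hγ
  have hβ0 : β ≠ 0 := root_ne_zero P hβ
  have hr : r ≠ 0 := by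
    rintro rfl
    simp at h
    exact hβ0 h
  obtain ⟨k₁, hk₁⟩ := P.pair_int β hβ γ hγ
  obtain ⟨k₂, hk₂⟩ := P.pair_int γ hγ β hβ
  have e₁ : (k₁ : ℝ) = 2 * r := by rw [← hk₁, h, pairing_smul_left_root r γ hγ0]
  have e₂ : (k₂ : ℝ) = 2 / r := by rw [← hk₂, h, pairing_root_smul r γ hr hγ0]
  have e₃ : ((k₁ : ℝ)) * ((k₂ : ℝ)) = 4 := by
    rw [e₁, e₂]
    field_simp
    ring
  have e₄ : k₁ * k₂ = 4 := by exact_mod_cast e₃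
  have hdvd : k₁ ∣ 4 := ⟨k₂, e₄.symm⟩
  have hk₁0 : k₁ ≠ 0 := by
    intro h0
    rw [h0] at e₁
    push_cast at e₁
    exact hr (by linarith)
  have hb2 : k₁ ≤ 4 := Int.le_of_dvd (by norm_num) hdvd
  have hb1 : -4 ≤ k₁ := by
    have := Int.le_of_dvd (by norm_num : (0:ℤ) < 4) (neg_dvd.mpr hdvd)
    linarith
  -- r = k₁ / 2
  have hrval : r = (k₁ : ℝ) / 2 := by linarith [e₁]
  interval_cases k₁
  · -- k₁ = -4, r = -2
    exfalso
    apply P.reduced γ hγ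
    have : -β = (2:ℝ) • γ := by
      rw [h, hrval]; push_cast; module
    rw [← this]
    exact P.neg_mem β hβ
  · exfalso; omega
  · -- k₁ = -2, r = -1
    right
    rw [h, hrval]
    push_cast
    module
  · -- k₁ = -1, r = -1/2, γ = -2 β
    exfalso
    apply P.reduced β hβ
    have : -γ = (2:ℝ) • β := by
      rw [h, hrval]
      push_cast
      module
    rw [← this]
    exact P.neg_mem γ hγ
  · exact absurd rfl hk₁0
  · -- k₁ = 1, r = 1/2, γ = 2 β
    exfalso
    apply P.reduced β hβ
    have : γ = (2:ℝ) • β := by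
      rw [h, hrval]
      push_cast
      module
    rw [← this]
    exact hγ
  · -- k₁ = 2, r = 1
    left
    rw [h, hrval]
    push_cast
    module
  · exfalso; omega
  · -- k₁ = 4, r = 2
    exfalso
    apply P.reduced γ hγ
    have : β = (2:ℝ) • γ := by
      rw [h, hrval]; push_cast; module
    rw [← this]
    exact hβ

lemma not_parallel {β γ : EV n} (hβ : β ∈ P.Φ) (hγ : γ ∈ P.Φ)
    (h1 : β ≠ γ) (h2 : β ≠ -γ) : ∀ r : ℝ, β ≠ r • γ := by
  intro r hr
  rcases eq_or_eq_neg_of_smul P hβ hγ hr with h | h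
  · exact h1 h
  · exact h2 h

lemma csq_lt {β γ : EV n} (hnp : ∀ r : ℝ, β ≠ r • γ) (hγ : γ ≠ 0) :
    ip β γ * ip β γ < ip β β * ip γ γ := by
  have hγ2 : 0 < ip γ γ := ip_self_pos hγ
  set c : ℝ := ip β γ / ip γ γ with hc
  have hx : β - c • γ ≠ 0 := by
    intro h0
    exact hnp c (by
      have : β = c • γ := by
        have := sub_eq_zero.mp h0
        exact this
      exact this)
  have hxx : 0 < ip (β - c • γ) (β - c • γ) := ip_self_pos hx
  have hexp : ip (β - c • γ) (β - c • γ)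
      = ip β β - 2 * (c * ip β γ) + c * (c * ip γ γ) := by
    rw [ip_sub_left, ip_sub_right, ip_sub_right, ip_smul_left, ip_smul_right,
      ip_smul_left, ip_smul_right]
    rw [ip_comm γ β]
    ring
  rw [hexp] at hxx
  have hcc : c * ip γ γ = ip β γ := by
    rw [hc]; field_simp
  nlinarith [hxx, hcc]

lemma pairing_mul_lt_four {β γ : EV n} (hβ : β ∈ P.Φ) (hγ : γ ∈ P.Φ)
    (hnp : ∀ r : ℝ, β ≠ r • γ) :
    pairing β γ * pairing γ β < 4 := by
  have h1 := root_ipsq_pos P hβ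
  have h2 := root_ipsq_pos P hγ
  have hcs := csq_lt hnp (root_ne_zero P hγ)
  rw [pairing_def, pairing_def, ip_comm γ β]
  rw [div_mul_div_comm]
  rw [div_lt_iff₀ (by positivity)]
  nlinarith [hcs]

/-- The string lemma: two non-parallel roots with positive inner product differ by a root. -/
lemma sub_mem_of_ip_pos {β γ : EV n} (hβ : β ∈ P.Φ) (hγ : γ ∈ P.Φ)
    (hip : 0 < ip β γ) (hnp : ∀ r : ℝ, β ≠ r • γ) : β - γ ∈ P.Φ := by
  obtain ⟨k₁, hk₁⟩ := P.pair_int β hβ γ hγ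
  obtain ⟨k₂, hk₂⟩ := P.pair_int γ hγ β hβ
  have h1 : 0 < pairing β γ := (pairing_pos_iff (root_ipsq_pos P hγ)).mpr hip
  have h2 : 0 < pairing γ β := by
    refine (pairing_pos_iff (root_ipsq_pos P hβ)).mpr ?_
    rw [ip_comm]; exact hip
  have hk₁pos : 0 < k₁ := by exact_mod_cast hk₁ ▸ h1
  have hk₂pos : 0 < k₂ := by exact_mod_cast hk₂ ▸ h2
  have hprod : k₁ * k₂ < 4 := by
    have := pairing_mul_lt_four P hβ hγ hnp
    rw [hk₁, hk₂] at this
    exact_mod_cast this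
  have hone : k₁ = 1 ∨ k₂ = 1 := by
    by_contra hcon
    push_neg at hcon
    have : 2 ≤ k₁ := by omega
    have : 2 ≤ k₂ := by omega
    nlinarith
  rcases hone with h | h
  · have : pairing β γ = 1 := by rw [hk₁, h]; norm_num
    have hmem := P.reflect_mem β hβ γ hγ
    rw [this, one_smul] at hmem
    exact hmem
  · have : pairing γ β = 1 := by rw [hk₂, h]; norm_num
    have hmem := P.reflect_mem γ hγ β hβ
    rw [this, one_smul] at hmem
    have := P.neg_mem _ hmem
    simpa using this

end MinusculeAux

namespace MinusculeAux

open RootSystemData Finset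

variable {n : ℕ} (P : RootSystemData n)

noncomputable local instance inst_s6 : DecidableEq (EV n) := Classical.decEq _

/-! ### Reflections -/

noncomputable def rf (γ : EV n) : EV n →ₗ[ℝ] EV n where
  toFun x := x - pairing x γ • γ
  map_add' x y := by
    show (x + y) - pairing (x + y) _ • _ = (x - _) + (y - _)
    rw [pairing_add_left]
    module
  map_smul' c x := by
    show (c • x) - pairing (c • x) _ • _ = c • (x - _)
    rw [pairing_smul_left]
    module

lemma rf_apply (γ x : EV n) : rf γ x = x - pairing x γ • γ := rfl

lemma pairing_zero_right (x : EV n) : pairing x 0 = 0 := by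
  rw [pairing_def]
  simp [ip]

lemma rf_ip (γ x y : EV n) : ip (rf γ x) (rf γ y) = ip x y := by
  by_cases hγ : γ = 0
  · simp [rf_apply, hγ, pairing_zero_right]
  · have hg : ip γ γ ≠ 0 := ne_of_gt (ip_self_pos hγ)
    rw [rf_apply, rf_apply, ip_sub_left, ip_sub_right, ip_sub_right,
      ip_smul_left, ip_smul_right, ip_smul_left, ip_smul_right,
      pairing_def, pairing_def, ip_comm γ y]
    field_simp
    ring

lemma rf_rf (γ x : EV n) : rf γ (rf γ x) = x := by
  by_cases hγ : γ = 0
  · simp [rf_apply, hγ, pairing_zero_right]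
  · rw [rf_apply, rf_apply, pairing_sub_left, pairing_smul_left, pairing_self hγ]
    module

lemma rf_root_mem {γ α : EV n} (hγ : γ ∈ P.Φ) (hα : α ∈ P.Φ) : rf γ α ∈ P.Φ :=
  P.reflect_mem α hα γ hγ

lemma rf_self (γ : EV n) (hγ : γ ≠ 0) : rf γ γ = -γ := by
  rw [rf_apply, pairing_self hγ]
  module

/-- A positive root other than `simple j` stays positive under the simple reflection. -/
lemma rf_simple_pos {j : Fin n} {β : EV n} (hβ : β ∈ P.pos) (hne : β ≠ P.simple j) :
    rf (P.simple j) β ∈ P.pos ∧ rf (P.simple j) β ≠ P.simple j := by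
  have hβΦ := pos_root_mem P hβ
  have hsΦ := simple_mem P (j := j)
  have hnneg : β ≠ -P.simple j := by
    intro h
    have := not_pos_of_neg_pos P hβΦ (by rw [h]; simpa using P.simple_mem_pos j)
    exact this hβ
  have hnp := not_parallel P hβΦ hsΦ hne hnneg
  have hrfΦ : rf (P.simple j) β ∈ P.Φ := rf_root_mem P hsΦ hβΦ
  obtain ⟨k, hkj, hk⟩ : ∃ k, k ≠ j ∧ 0 < cd P β k := by
    by_contra hcon
    push_neg at hcon
    apply hnp (cd P β j)
    have : ∀ k, k ≠ j → cd P β k = 0 := fun k hkj =>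
      le_antisymm (by simpa using hcon k hkj) (pos_cd_nonneg P hβ k)
    conv_lhs => rw [eq_sum_cd P β]
    rw [Finset.sum_eq_single j]
    · intro b _ hbj
      rw [this b hbj, zero_smul]
    · intro h; exact absurd (Finset.mem_univ j) h
  have hcd : cd P (rf (P.simple j) β) k = cd P β k := by
    rw [rf_apply, cd_sub, cd_smul, cd_simple]
    simp [Ne.symm hkj]
  have hpos : rf (P.simple j) β ∈ P.pos :=
    mem_pos_of_cd_pos P hrfΦ (j := k) (by rw [hcd]; exact hk)
  refine ⟨hpos, ?_⟩
  intro h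
  have h2 := congrArg (rf (P.simple j)) h
  rw [rf_rf, rf_self _ (simple_ne_zero P j)] at h2
  exact hnneg h2

lemma rf_sum_erase (j : Fin n) :
    ∑ β ∈ P.pos.erase (P.simple j), rf (P.simple j) β
      = ∑ β ∈ P.pos.erase (P.simple j), β := by
  apply Finset.sum_nbij' (i := fun β => rf (P.simple j) β) (j := fun β => rf (P.simple j) β)
  · intro β hβ
    rw [Finset.mem_erase] at hβ ⊢
    have := rf_simple_pos P hβ.2 hβ.1
    exact ⟨this.2, this.1⟩
  · intro β hβ
    rw [Finset.mem_erase] at hβ ⊢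
    have := rf_simple_pos P hβ.2 hβ.1
    exact ⟨this.2, this.1⟩
  · intro β _; exact rf_rf _ _
  · intro β _; exact rf_rf _ _
  · intro β _; rfl

lemma sum_pos_eq (j : Fin n) :
    ∑ β ∈ P.pos, β = P.simple j + ∑ β ∈ P.pos.erase (P.simple j), β :=
  (Finset.add_sum_erase _ _ (P.simple_mem_pos j)).symm

lemma rf_rho (j : Fin n) : rf (P.simple j) P.rho = P.rho - P.simple j := by
  have hρ : P.rho = (2⁻¹ : ℝ) • ∑ α ∈ P.pos, α := rfl
  have e1 : ∑ β ∈ P.pos, rf (P.simple j) β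
      = rf (P.simple j) (P.simple j) + ∑ β ∈ P.pos.erase (P.simple j), rf (P.simple j) β :=
    (Finset.add_sum_erase _ _ (P.simple_mem_pos j)).symm
  have e2 := rf_sum_erase P j
  have e3 := sum_pos_eq P j
  rw [hρ, map_smul, map_sum, e1, e2, rf_self _ (simple_ne_zero P j), e3]
  module

lemma pairing_rho_simple (j : Fin n) : pairing P.rho (P.simple j) = 1 := by
  have h1 := rf_rho P j
  rw [rf_apply] at h1
  have h2 : pairing P.rho (P.simple j) • P.simple j = P.simple j := sub_right_injective h1
  have h3 : (pairing P.rho (P.simple j) - 1) • P.simple j = 0 := by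
    rw [sub_smul, one_smul, h2, sub_self]
  rcases smul_eq_zero.mp h3 with h | h
  · linarith [sub_eq_zero.mp (by linarith [h] : pairing P.rho (P.simple j) - 1 = 0)]
  · exact absurd h (simple_ne_zero P j)

lemma ip_rho_simple (j : Fin n) :
    ip P.rho (P.simple j) = ip (P.simple j) (P.simple j) / 2 := by
  have h := pairing_rho_simple P j
  rw [pairing_def] at h
  have hg : ip (P.simple j) (P.simple j) ≠ 0 := ne_of_gt (simple_ipsq_pos P j)
  field_simp at h
  linarith

lemma ip_rho_simple_pos (j : Fin n) : 0 < ip P.rho (P.simple j) := by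
  rw [ip_rho_simple]
  have := simple_ipsq_pos P j
  linarith

lemma ip_rho_pos_of_pos {β : EV n} (hβ : β ∈ P.pos) : 0 < ip P.rho β := by
  obtain ⟨k, hk⟩ := pos_cd_exists_pos P hβ
  have hrepr := eq_sum_cd P β
  calc (0:ℝ) < ∑ m, cd P β m * ip P.rho (P.simple m) := by
        apply Finset.sum_pos' 
        · intro m _
          exact mul_nonneg (pos_cd_nonneg P hβ m) (le_of_lt (ip_rho_simple_pos P m))
        · exact ⟨k, Finset.mem_univ k, mul_pos hk (ip_rho_simple_pos P k)⟩
    _ = ip P.rho β := by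
        conv_rhs => rw [hrepr]
        rw [ip_sum_right]
        congr 1
        ext m
        rw [ip_smul_right]

lemma mem_pos_iff_ip_rho {β : EV n} (hβ : β ∈ P.Φ) : β ∈ P.pos ↔ 0 < ip P.rho β := by
  constructor
  · exact fun h => ip_rho_pos_of_pos P h
  · intro h
    by_contra hp
    have := ip_rho_pos_of_pos P (neg_mem_pos_of_not_pos P hβ hp)
    rw [ip_neg_right] at this
    linarith

lemma ip_rho_ne_zero {β : EV n} (hβ : β ∈ P.Φ) : ip P.rho β ≠ 0 := by
  by_cases h : β ∈ P.pos
  · exact ne_of_gt (ip_rho_pos_of_pos P h)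
  · have := ip_rho_pos_of_pos P (neg_mem_pos_of_not_pos P hβ h)
    rw [ip_neg_right] at this
    exact ne_of_lt (by linarith)

lemma pairing_rho_pos_of_pos {β : EV n} (hβ : β ∈ P.pos) : 0 < pairing P.rho β :=
  (pairing_pos_iff (root_ipsq_pos P (pos_root_mem P hβ))).mpr (ip_rho_pos_of_pos P hβ)

end MinusculeAux

namespace MinusculeAux

open RootSystemData Finset

variable {n : ℕ} (P : RootSystemData n)

noncomputable local instance inst_s6_2 : DecidableEq (EV n) := Classical.decEq _

/-! ### Coroots -/

lemma coroot_def (α : EV n) : coroot α = (2 / ip α α) • α := rfl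

lemma ip_coroot (x α : EV n) : ip x (coroot α) = pairing x α := by
  rw [coroot_def, ip_smul_right, pairing_def]
  ring

lemma coroot_ne_zero {α : EV n} (hα : α ≠ 0) : coroot α ≠ 0 := by
  rw [coroot_def]
  have h := ip_self_pos hα
  exact smul_ne_zero (by positivity) hα

lemma coroot_neg (α : EV n) : coroot (-α) = -coroot α := by
  rw [coroot_def, coroot_def]
  have : ip (-α) (-α) = ip α α := by rw [ip_neg_left, ip_neg_right]; ring
  rw [this, smul_neg]

lemma coroot_smul_self (α : EV n) (hα : α ≠ 0) : α = (ip α α / 2) • coroot α := by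
  rw [coroot_def, smul_smul]
  have h := ip_self_pos hα
  have : ip α α / 2 * (2 / ip α α) = 1 := by field_simp
  rw [this, one_smul]

lemma coroot_inj {α β : EV n} (hα : α ∈ P.Φ) (hβ : β ∈ P.Φ) (h : coroot α = coroot β) :
    α = β := by
  have hα0 := root_ne_zero P hα
  have hβ0 := root_ne_zero P hβ
  have : α = (ip α α / 2 * (2 / ip β β)) • β := by
    rw [← smul_smul, ← coroot_def, ← h, ← coroot_smul_self α hα0]
  rcases eq_or_eq_neg_of_smul P hα hβ this with h1 | h1
  · exact h1
  · exfalso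
    rw [h1, coroot_neg] at h
    have : coroot β = 0 := by
      have := h
      apply neg_eq_iff_add_eq_zero.mp at this
      have h2 : (2:ℝ) • coroot β = 0 := by
        rw [two_smul]; exact this
      simpa using h2
    exact coroot_ne_zero hβ0 this

/-- Transfer of reflection to coroots. -/
lemma coroot_rf {β γ : EV n} (hβ : β ≠ 0) (hγ : γ ≠ 0) :
    coroot (rf γ β) = coroot β - pairing γ β • coroot γ := by
  have hnorm : ip (rf γ β) (rf γ β) = ip β β := rf_ip γ β β
  rw [coroot_def, coroot_def, coroot_def, hnorm, rf_apply]
  have hb := ip_self_pos hβ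
  have hg := ip_self_pos hγ
  rw [smul_sub, smul_smul, pairing_def, pairing_def, smul_smul, ip_comm γ β]
  congr 1
  congr 1
  field_simp

/-- String lemma at the coroot level. -/
lemma coroot_sub_mem {β γ : EV n} (hβ : β ∈ P.Φ) (hγ : γ ∈ P.Φ)
    (hip : 0 < ip β γ) (hnp : ∀ r : ℝ, β ≠ r • γ) :
    ∃ δ ∈ P.Φ, coroot δ = coroot β - coroot γ := by
  obtain ⟨k₁, hk₁⟩ := P.pair_int β hβ γ hγ
  obtain ⟨k₂, hk₂⟩ := P.pair_int γ hγ β hβ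
  have h1 : 0 < pairing β γ := (pairing_pos_iff (root_ipsq_pos P hγ)).mpr hip
  have h2 : 0 < pairing γ β := by
    refine (pairing_pos_iff (root_ipsq_pos P hβ)).mpr ?_
    rw [ip_comm]; exact hip
  have hk₁pos : 0 < k₁ := by exact_mod_cast hk₁ ▸ h1
  have hk₂pos : 0 < k₂ := by exact_mod_cast hk₂ ▸ h2
  have hprod : k₁ * k₂ < 4 := by
    have := pairing_mul_lt_four P hβ hγ hnp
    rw [hk₁, hk₂] at this
    exact_mod_cast this
  have hβ0 := root_ne_zero P hβ
  have hγ0 := root_ne_zero P hγ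
  have hone : k₂ = 1 ∨ k₁ = 1 := by
    by_contra hcon
    push_neg at hcon
    have : 2 ≤ k₁ := by omega
    have : 2 ≤ k₂ := by omega
    nlinarith
  rcases hone with h | h
  · refine ⟨rf γ β, rf_root_mem P hγ hβ, ?_⟩
    rw [coroot_rf hβ0 hγ0, hk₂, h]
    push_cast
    rw [one_smul]
  · refine ⟨-(rf β γ), P.neg_mem _ (rf_root_mem P hβ hγ), ?_⟩
    rw [coroot_neg, coroot_rf hγ0 hβ0, hk₁, h]
    push_cast
    rw [one_smul]
    module

lemma coroot_add_mem {β γ : EV n} (hβ : β ∈ P.Φ) (hγ : γ ∈ P.Φ)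
    (hip : ip β γ < 0) (hnp : ∀ r : ℝ, β ≠ r • γ) :
    ∃ δ ∈ P.Φ, coroot δ = coroot β + coroot γ := by
  have hng : -γ ∈ P.Φ := P.neg_mem γ hγ
  have hip' : 0 < ip β (-γ) := by rw [ip_neg_right]; linarith
  have hnp' : ∀ r : ℝ, β ≠ r • (-γ) := by
    intro r h
    exact hnp (-r) (by rw [h]; module)
  obtain ⟨δ, hδ, heq⟩ := coroot_sub_mem P hβ hng hip' hnp'
  refine ⟨δ, hδ, ?_⟩
  rw [heq, coroot_neg]
  module

lemma cd_coroot (x : EV n) (j : Fin n) : cd P (coroot x) j = (2 / ip x x) * cd P x j := by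
  rw [coroot_def, cd_smul]

lemma eq_smul_simple_of_cd {β : EV n} (hβ : β ∈ P.pos) (j : Fin n)
    (h : ∀ k, k ≠ j → cd P β k = 0) : β = cd P β j • P.simple j := by
  conv_lhs => rw [eq_sum_cd P β]
  rw [Finset.sum_eq_single j]
  · intro b _ hbj
    rw [h b hbj, zero_smul]
  · intro h'; exact absurd (Finset.mem_univ j) h'

/-- Descent for coroots of positive roots. -/
lemma descent {β : EV n} (hβ : β ∈ P.pos) :
    (∃ j, β = P.simple j) ∨
    (∃ j, ∃ δ ∈ P.pos, coroot β = coroot δ + coroot (P.simple j)) := by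
  have hβΦ := pos_root_mem P hβ
  obtain ⟨j, hj⟩ : ∃ j, 0 < ip (P.simple j) β := by
    by_contra hcon
    push_neg at hcon
    have h0 : ip β β ≤ 0 := by
      have e : ip β β = ∑ k, cd P β k * ip (P.simple k) β := by
        have h1 : ip β β = ip (∑ j, cd P β j • P.simple j) β := by
          exact congrArg (fun z => ip z β) (eq_sum_cd P β)
        rw [h1, ip_sum_left]
        exact Finset.sum_congr rfl fun k _ => ip_smul_left _ _ _
      rw [e]
      apply Finset.sum_nonpos
      intro k _
      exact mul_nonpos_of_nonneg_of_nonpos (pos_cd_nonneg P hβ k) (hcon k)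
    linarith [ip_self_pos (root_ne_zero P hβΦ)]
  by_cases hpar : ∀ r : ℝ, β ≠ r • P.simple j
  · obtain ⟨δ, hδΦ, heq⟩ := coroot_sub_mem P hβΦ (simple_mem P) (by rw [ip_comm]; exact hj) hpar
    have hδpos : δ ∈ P.pos := by
      by_contra hneg
      have hnd := neg_mem_pos_of_not_pos P hδΦ hneg
      have hkey : ∀ k, k ≠ j → cd P β k = 0 := by
        intro k hkj
        have e1 : cd P (coroot δ) k = cd P (coroot β) k - cd P (coroot (P.simple j)) k := by
          rw [heq, cd_sub]
        rw [cd_coroot, cd_coroot, cd_coroot, cd_simple] at e1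
        simp only [if_neg (Ne.symm hkj), mul_zero, sub_zero] at e1
        have hd := root_ipsq_pos P hδΦ
        have hb := root_ipsq_pos P hβΦ
        have hcdδ : cd P δ k ≤ 0 := by
          have := pos_cd_nonneg P hnd k
          rw [cd_neg] at this
          linarith
        have hcdβ : 0 ≤ cd P β k := pos_cd_nonneg P hβ k
        have hL : (2 / ip δ δ) * cd P δ k ≤ 0 :=
          mul_nonpos_of_nonneg_of_nonpos (by positivity) hcdδ
        have hR : 0 ≤ (2 / ip β β) * cd P β k := by positivity
        have : (2 / ip β β) * cd P β k = 0 := by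
          rw [e1] at hL
          linarith
        have h2b : (2 : ℝ) / ip β β ≠ 0 := by positivity
        exact (mul_eq_zero.mp this).resolve_left h2b
      have := eq_smul_simple_of_cd P hβ j hkey
      exact hpar _ this
    right
    exact ⟨j, δ, hδpos, by rw [heq]; module⟩
  · push_neg at hpar
    obtain ⟨r, hr⟩ := hpar
    rcases eq_or_eq_neg_of_smul P hβΦ (simple_mem P) hr with h | h
    · exact Or.inl ⟨j, h⟩
    · exfalso
      have := not_pos_of_neg_pos P hβΦ (by rw [h]; simpa using P.simple_mem_pos j)
      exact this hβ

lemma pairing_rho_eq_ip_coroot (β : EV n) : pairing P.rho β = ip P.rho (coroot β) :=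
  (ip_coroot P.rho β).symm

/-- Heights of positive roots are positive integers. -/
lemma ht_nat_aux : ∀ N : ℕ, ∀ β, β ∈ P.pos →
    (P.pos.filter (fun γ => pairing P.rho γ < pairing P.rho β)).card < N →
    ∃ m : ℕ, 1 ≤ m ∧ pairing P.rho β = (m : ℝ) := by
  intro N
  induction N with
  | zero => intro β _ h; omega
  | succ N IH =>
    intro β hβ hcard
    rcases descent P hβ with ⟨j, hj⟩ | ⟨j, δ, hδ, heq⟩
    · exact ⟨1, le_refl 1, by rw [hj, pairing_rho_simple P j]; norm_num⟩
    · have hht : pairing P.rho β = pairing P.rho δ + 1 := by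
        rw [pairing_rho_eq_ip_coroot, pairing_rho_eq_ip_coroot, heq, ip_add_right,
          ip_coroot, ip_coroot, pairing_rho_simple P j]
      have hlt : pairing P.rho δ < pairing P.rho β := by rw [hht]; linarith
      have hsub : P.pos.filter (fun γ => pairing P.rho γ < pairing P.rho δ)
          ⊆ P.pos.filter (fun γ => pairing P.rho γ < pairing P.rho β) := by
        intro γ hγ
        rw [Finset.mem_filter] at hγ ⊢
        exact ⟨hγ.1, lt_trans hγ.2 hlt⟩
      have hss : P.pos.filter (fun γ => pairing P.rho γ < pairing P.rho δ)
          ⊂ P.pos.filter (fun γ => pairing P.rho γ < pairing P.rho β) := by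
        refine ⟨hsub, fun hsup => ?_⟩
        have hmem : δ ∈ P.pos.filter (fun γ => pairing P.rho γ < pairing P.rho β) :=
          Finset.mem_filter.mpr ⟨hδ, hlt⟩
        have := hsup hmem
        rw [Finset.mem_filter] at this
        exact lt_irrefl _ this.2
      have hc := Finset.card_lt_card hss
      obtain ⟨m, hm1, hm2⟩ := IH δ hδ (by omega)
      exact ⟨m + 1, by omega, by rw [hht, hm2]; push_cast; ring⟩

lemma ht_nat {β : EV n} (hβ : β ∈ P.pos) :
    ∃ m : ℕ, 1 ≤ m ∧ pairing P.rho β = (m : ℝ) :=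
  ht_nat_aux P _ β hβ (Nat.lt_succ_self _)

end MinusculeAux

namespace MinusculeAux

open RootSystemData Finset

variable {n : ℕ} (P : RootSystemData n) {i : Fin n} {ϖ : EV n}

noncomputable local instance inst_s6_3 : DecidableEq (EV n) := Classical.decEq _

/-! ### Facts about the minuscule fundamental weight -/

lemma ip_w_simple_ne (hf : P.IsFundWeight i ϖ) {j : Fin n} (hj : j ≠ i) :
    ip ϖ (P.simple j) = 0 := by
  have h := hf j
  rw [if_neg hj] at h
  exact (pairing_eq_zero_iff (simple_ipsq_pos P j)).mp h

lemma ip_w_simple_i (hf : P.IsFundWeight i ϖ) :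
    ip ϖ (P.simple i) = ip (P.simple i) (P.simple i) / 2 := by
  have h := hf i
  rw [if_pos rfl, pairing_def] at h
  have hg : ip (P.simple i) (P.simple i) ≠ 0 := ne_of_gt (simple_ipsq_pos P i)
  field_simp at h
  linarith

lemma ip_w_pos_expand (hf : P.IsFundWeight i ϖ) {β : EV n} (hβ : β ∈ P.pos) :
    ip ϖ β = cd P β i * (ip (P.simple i) (P.simple i) / 2) := by
  have h1 : ip ϖ β = ∑ k, cd P β k * ip ϖ (P.simple k) := by
    have h2 : ip ϖ β = ip ϖ (∑ k, cd P β k • P.simple k) :=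
      congrArg (fun z => ip ϖ z) (eq_sum_cd P β)
    rw [h2, ip_sum_right]
    exact Finset.sum_congr rfl fun k _ => ip_smul_right _ _ _
  rw [h1, Finset.sum_eq_single i]
  · rw [ip_w_simple_i P hf]
  · intro k _ hki
    rw [ip_w_simple_ne P hf hki, mul_zero]
  · intro h; exact absurd (Finset.mem_univ i) h

lemma ip_w_nonneg (hf : P.IsFundWeight i ϖ) {β : EV n} (hβ : β ∈ P.pos) :
    0 ≤ ip ϖ β := by
  rw [ip_w_pos_expand P hf hβ]
  have := simple_ipsq_pos P i
  have := pos_cd_nonneg P hβ i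
  positivity

lemma pairing_w_nonneg (hf : P.IsFundWeight i ϖ) {β : EV n} (hβ : β ∈ P.pos) :
    0 ≤ pairing ϖ β :=
  (pairing_nonneg_iff (root_ipsq_pos P (pos_root_mem P hβ))).mpr (ip_w_nonneg P hf hβ)

lemma root_mem_weightLattice {β : EV n} (hβ : β ∈ P.Φ) : β ∈ P.weightLattice :=
  fun α hα => P.pair_int β hβ α hα

lemma pairing_w_int (hm : P.Minuscule ϖ) {β : EV n} (hβ : β ∈ P.Φ) :
    ∃ k : ℤ, pairing ϖ β = (k : ℝ) :=
  hm.2.1 β hβ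

/-- There is no positive root `β` with `ϖ - β` dominant. -/
lemma not_dominant_sub (hm : P.Minuscule ϖ) {β : EV n} (hβ : β ∈ P.pos)
    (hdom : ∀ j, 0 ≤ pairing (ϖ - β) (P.simple j)) : False := by
  obtain ⟨hne, hX, hdomϖ, hminim⟩ := hm
  have hβΦ := pos_root_mem P hβ
  have hXμ : ϖ - β ∈ P.weightLattice :=
    P.weightLattice.sub_mem hX (root_mem_weightLattice P hβΦ)
  obtain ⟨c, hc⟩ := P.pos_sum β hβ
  have hle : P.DomLE (ϖ - β) ϖ := ⟨c, by rw [sub_sub_cancel]; exact hc⟩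
  have := hminim (ϖ - β) hXμ hdom hle
  exact root_ne_zero P hβΦ (sub_eq_self.mp this)

/-- A positive root minus a simple root (when not parallel, positive inner product)
is again positive. -/
lemma sub_simple_pos {β : EV n} (hβ : β ∈ P.pos) {k : Fin n}
    (hip : 0 < ip β (P.simple k)) (hnp : ∀ r : ℝ, β ≠ r • P.simple k) :
    β - P.simple k ∈ P.pos := by
  have hβΦ := pos_root_mem P hβ
  have hδΦ : β - P.simple k ∈ P.Φ := sub_mem_of_ip_pos P hβΦ (simple_mem P) hip hnp
  by_contra hneg
  have hnd := neg_mem_pos_of_not_pos P hδΦ hneg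
  have hkey : ∀ m, m ≠ k → cd P β m = 0 := by
    intro m hmk
    have h1 : cd P (β - P.simple k) m = cd P β m - cd P (P.simple k) m := cd_sub P β _ m
    rw [cd_simple, if_neg (Ne.symm hmk), sub_zero] at h1
    have h2 : cd P (β - P.simple k) m ≤ 0 := by
      have := pos_cd_nonneg P hnd m
      rw [cd_neg] at this
      linarith
    have h3 := pos_cd_nonneg P hβ m
    linarith [h1 ▸ h2]
  exact hnp _ (eq_smul_simple_of_cd P hβ k hkey)

/-- The minuscule bound: `⟨ϖ, β∨⟩ ∈ {0, 1}` for every positive root. -/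
lemma pairing_w_mem (hf : P.IsFundWeight i ϖ) (hm : P.Minuscule ϖ) {β : EV n}
    (hβ : β ∈ P.pos) : pairing ϖ β = 0 ∨ pairing ϖ β = 1 := by
  have hS : ∀ γ ∈ P.pos, pairing ϖ γ < 2 := by
    by_contra hcon
    push_neg at hcon
    obtain ⟨β₀, hβ₀, hβ₀2⟩ := hcon
    obtain ⟨β, hβmem, hmin⟩ := Finset.exists_min_image
      (P.pos.filter fun γ => 2 ≤ pairing ϖ γ) (fun γ => ip P.rho γ)
      ⟨β₀, Finset.mem_filter.mpr ⟨hβ₀, hβ₀2⟩⟩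
    rw [Finset.mem_filter] at hβmem
    obtain ⟨hβpos, hβ2⟩ := hβmem
    have hβΦ := pos_root_mem P hβpos
    have hβip := root_ipsq_pos P hβΦ
    have hϖβpos : 0 < ip ϖ β := by
      have : 0 < pairing ϖ β := by linarith
      exact (pairing_pos_iff hβip).mp this
    -- Step 1: all pairings with non-i simple roots are ≤ 0
    have step1 : ∀ k, k ≠ i → pairing β (P.simple k) ≤ 0 := by
      intro k hki
      by_contra hk
      push_neg at hk
      have hipk : 0 < ip β (P.simple k) := (pairing_pos_iff (simple_ipsq_pos P k)).mp hk
      have hne : β ≠ P.simple k := by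
        intro h
        rw [h, hf k, if_neg hki] at hβ2
        norm_num at hβ2
      have hnneg : β ≠ -P.simple k := by
        intro h
        exact not_pos_of_neg_pos P hβΦ (by rw [h]; simpa using P.simple_mem_pos k) hβpos
      have hnp := not_parallel P hβΦ (simple_mem P) hne hnneg
      have hδpos : β - P.simple k ∈ P.pos := sub_simple_pos P hβpos hipk hnp
      have hδΦ := pos_root_mem P hδpos
      have hδip := root_ipsq_pos P hδΦ
      -- pairing β (simple k) ≥ 1 since it is a positive integer
      obtain ⟨kk, hkk⟩ := P.pair_int β hβΦ (P.simple k) (simple_mem P)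
      have hkk1 : (1:ℝ) ≤ pairing β (P.simple k) := by
        rw [hkk]
        have : 0 < kk := by exact_mod_cast hkk ▸ hk
        exact_mod_cast this
      have hlen : ip (β - P.simple k) (β - P.simple k) ≤ ip β β := by
        rw [ip_sub_left, ip_sub_right, ip_sub_right]
        have hp : ip (P.simple k) (P.simple k) ≤ 2 * ip β (P.simple k) := by
          rw [pairing_def] at hkk1
          have hsk := simple_ipsq_pos P k
          rw [le_div_iff₀ hsk] at hkk1
          linarith
        rw [ip_comm (P.simple k) β]
        linarith
      have hϖδ : ip ϖ (β - P.simple k) = ip ϖ β := by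
        rw [ip_sub_right, ip_w_simple_ne P hf hki, sub_zero]
      have hδ2 : 2 ≤ pairing ϖ (β - P.simple k) := by
        rw [pairing_def, hϖδ]
        rw [pairing_def] at hβ2
        rw [le_div_iff₀ (by positivity)]
        rw [le_div_iff₀ (by positivity)] at hβ2
        nlinarith
      have hδfilter : β - P.simple k ∈ P.pos.filter fun γ => 2 ≤ pairing ϖ γ :=
        Finset.mem_filter.mpr ⟨hδpos, hδ2⟩
      have hminδ := hmin _ hδfilter
      have : ip P.rho (β - P.simple k) < ip P.rho β := by
        rw [ip_sub_right]
        have := ip_rho_simple_pos P k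
        linarith
      linarith
    -- Step 2: the pairing with the i-th simple root
    by_cases hp : pairing β (P.simple i) ≤ 1
    · apply not_dominant_sub P hm hβpos
      intro j
      rw [pairing_sub_left, hf j]
      by_cases hji : j = i
      · rw [if_pos hji, hji]
        linarith
      · rw [if_neg hji]
        have := step1 j hji
        linarith
    · push_neg at hp
      obtain ⟨kp, hkp⟩ := P.pair_int β hβΦ (P.simple i) (simple_mem P)
      have hp2 : (2:ℝ) ≤ pairing β (P.simple i) := by
        rw [hkp]
        have : 1 < kp := by exact_mod_cast hkp ▸ hp
        exact_mod_cast this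
      have hipsi : 0 < ip β (P.simple i) := by
        have : 0 < pairing β (P.simple i) := by linarith
        exact (pairing_pos_iff (simple_ipsq_pos P i)).mp this
      have hne : β ≠ P.simple i := by
        intro h
        rw [h, hf i, if_pos rfl] at hβ2
        norm_num at hβ2
      have hnneg : β ≠ -P.simple i := by
        intro h
        exact not_pos_of_neg_pos P hβΦ (by rw [h]; simpa using P.simple_mem_pos i) hβpos
      have hnp := not_parallel P hβΦ (simple_mem P) hne hnneg
      -- q := pairing (s i) β must be 1
      obtain ⟨kq, hkq⟩ := P.pair_int (P.simple i) (simple_mem P) β hβΦ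
      have hq1 : pairing (P.simple i) β = 1 := by
        have hqpos : 0 < pairing (P.simple i) β := by
          refine (pairing_pos_iff hβip).mpr ?_
          rw [ip_comm]; exact hipsi
        have hkqpos : 0 < kq := by exact_mod_cast hkq ▸ hqpos
        have hprod : pairing β (P.simple i) * pairing (P.simple i) β < 4 :=
          pairing_mul_lt_four P hβΦ (simple_mem P) hnp
        have : (kp : ℝ) * kq < 4 := by rw [← hkp, ← hkq]; exact hprod
        have hint : kp * kq < 4 := by exact_mod_cast this
        have hkp2 : 2 ≤ kp := by
          have : (2:ℝ) ≤ (kp:ℝ) := by rw [← hkp]; exact hp2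
          exact_mod_cast this
        have : kq = 1 := by nlinarith
        rw [hkq, this]
        norm_num
      -- q = 1 gives 2 ⟨s i, β⟩ = ⟨β, β⟩
      have hkey : 2 * ip β (P.simple i) = ip β β := by
        rw [pairing_def] at hq1
        have : 2 * ip (P.simple i) β = ip β β := by
          field_simp at hq1
          linarith
        rw [ip_comm]
        exact this
      have hlenβ : ip β β = pairing β (P.simple i) * ip (P.simple i) (P.simple i) := by
        rw [pairing_def]
        have := simple_ipsq_pos P i
        field_simp
        linarith
      have hδpos : β - P.simple i ∈ P.pos := sub_simple_pos P hβpos hipsi hnp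
      have hδlen : ip (β - P.simple i) (β - P.simple i) = ip (P.simple i) (P.simple i) := by
        rw [ip_sub_left, ip_sub_right, ip_sub_right, ip_comm (P.simple i) β]
        linarith
      have hδ2 : 2 ≤ pairing ϖ (β - P.simple i) := by
        have hϖδ : ip ϖ (β - P.simple i) = ip ϖ β - ip ϖ (P.simple i) := ip_sub_right _ _ _
        rw [pairing_def, hδlen, hϖδ, ip_w_simple_i P hf]
        have hsi := simple_ipsq_pos P i
        rw [le_div_iff₀ (by positivity)]
        -- need: 2 * (ip ϖ β - ip si si / 2) ≥ 2 * ip si si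
        -- ip ϖ β ≥ ip β β (pairing ϖ β ≥ 2) and ip β β = p' * ip si si ≥ 2 ip si si
        rw [pairing_def, le_div_iff₀ (by positivity)] at hβ2
        nlinarith
      have hδfilter : β - P.simple i ∈ P.pos.filter fun γ => 2 ≤ pairing ϖ γ :=
        Finset.mem_filter.mpr ⟨hδpos, hδ2⟩
      have hminδ := hmin _ hδfilter
      have : ip P.rho (β - P.simple i) < ip P.rho β := by
        rw [ip_sub_right]
        have := ip_rho_simple_pos P i
        linarith
      linarith
  -- conclude
  obtain ⟨k, hk⟩ := pairing_w_int P hm (pos_root_mem P hβ)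
  have h0 := pairing_w_nonneg P hf hβ
  have h2 := hS β hβ
  rw [hk] at h0 h2 ⊢
  have hk0 : 0 ≤ k := by exact_mod_cast h0
  have hk2 : k < 2 := by exact_mod_cast h2
  interval_cases k
  · left; norm_num
  · right; norm_num

/-- Membership in the span of the non-`i` simple roots forces orthogonality to `ϖ`. -/
lemma ip_w_eq_zero_of_mem_span (hf : P.IsFundWeight i ϖ) {x : EV n}
    (hx : x ∈ Submodule.span ℝ (P.simple '' {j | j ≠ i})) : ip ϖ x = 0 := by
  induction hx using Submodule.span_induction with
  | mem y hy =>
      obtain ⟨j, hj, rfl⟩ := hy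
      exact ip_w_simple_ne P hf hj
  | zero => simp [ip]
  | add y z _ _ hy hz => rw [ip_add_right, hy, hz, add_zero]
  | smul c y _ hy => rw [ip_smul_right, hy, mul_zero]

lemma not_posIn_of_pairing_w_ne (hf : P.IsFundWeight i ϖ) {β : EV n}
    (hne : pairing ϖ β ≠ 0) (hβ : β ∈ P.Φ) : β ∉ P.posIn i := by
  intro hmem
  have hx := ip_w_eq_zero_of_mem_span P hf hmem.2
  exact hne ((pairing_eq_zero_iff (root_ipsq_pos P hβ)).mpr hx)

end MinusculeAux

namespace MinusculeAux

open RootSystemData Finset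

open scoped Classical

variable {n : ℕ} (P : RootSystemData n) {i : Fin n} {ϖ : EV n}

/-- The set of positive roots outside the parabolic: `⟨ϖ, β∨⟩ = 1`. -/
noncomputable def lay1 (P : RootSystemData n) (ϖ : EV n) : Finset (EV n) :=
  P.pos.filter fun β => pairing ϖ β = 1

lemma mem_lay1 {β : EV n} : β ∈ lay1 P ϖ ↔ β ∈ P.pos ∧ pairing ϖ β = 1 := by
  rw [lay1, Finset.mem_filter]

lemma simple_i_mem_lay1 (hf : P.IsFundWeight i ϖ) : P.simple i ∈ lay1 P ϖ := by
  rw [mem_lay1]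
  refine ⟨P.simple_mem_pos i, ?_⟩
  have := hf i
  rwa [if_pos rfl] at this

lemma lay1_nonempty (hf : P.IsFundWeight i ϖ) : (lay1 P ϖ).Nonempty :=
  ⟨P.simple i, simple_i_mem_lay1 P hf⟩

lemma pairing_w_rf (hf : P.IsFundWeight i ϖ) {j : Fin n} (hj : j ≠ i) (β : EV n) :
    pairing ϖ (rf (P.simple j) β) = pairing ϖ β := by
  have h1 : ip ϖ (rf (P.simple j) β) = ip ϖ β := by
    rw [rf_apply, ip_sub_right, ip_smul_right, ip_w_simple_ne P hf hj, mul_zero, sub_zero]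
  have h2 : ip (rf (P.simple j) β) (rf (P.simple j) β) = ip β β := rf_ip _ _ _
  rw [pairing_def, pairing_def, h1, h2]

lemma rf_mem_lay1 (hf : P.IsFundWeight i ϖ) {j : Fin n} (hj : j ≠ i) {β : EV n}
    (hβ : β ∈ lay1 P ϖ) : rf (P.simple j) β ∈ lay1 P ϖ := by
  rw [mem_lay1] at hβ ⊢
  have hne : β ≠ P.simple j := by
    intro h
    have := hf j
    rw [if_neg hj] at this
    obtain ⟨h1, h2⟩ := hβ
    rw [h, this] at h2
    norm_num at h2
  exact ⟨(rf_simple_pos P hβ.1 hne).1, by rw [pairing_w_rf P hf hj]; exact hβ.2⟩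

/-- The sum of the layer-one positive roots. -/
noncomputable def Sm (P : RootSystemData n) (ϖ : EV n) : EV n := ∑ β ∈ lay1 P ϖ, β

lemma rf_Sm (hf : P.IsFundWeight i ϖ) {j : Fin n} (hj : j ≠ i) :
    rf (P.simple j) (Sm P ϖ) = Sm P ϖ := by
  rw [Sm, map_sum]
  apply Finset.sum_nbij' (i := fun β => rf (P.simple j) β) (j := fun β => rf (P.simple j) β)
  · intro β hβ; exact rf_mem_lay1 P hf hj hβ
  · intro β hβ; exact rf_mem_lay1 P hf hj hβ
  · intro β _; exact rf_rf _ _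
  · intro β _; exact rf_rf _ _
  · intro β _; rfl

lemma ip_Sm_simple (hf : P.IsFundWeight i ϖ) {j : Fin n} (hj : j ≠ i) :
    ip (Sm P ϖ) (P.simple j) = 0 := by
  have h := rf_Sm P hf hj
  rw [rf_apply] at h
  have h2 : pairing (Sm P ϖ) (P.simple j) • P.simple j = 0 := by
    have := sub_eq_self.mp h
    exact this
  rcases smul_eq_zero.mp h2 with h3 | h3
  · rw [pairing_def] at h3
    rcases div_eq_zero_iff.mp h3 with h4 | h4
    · linarith
    · exact absurd h4 (ne_of_gt (simple_ipsq_pos P j))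
  · exact absurd h3 (simple_ne_zero P j)

lemma ip_w_expand (hf : P.IsFundWeight i ϖ) (x : EV n) :
    ip ϖ x = cd P x i * (ip (P.simple i) (P.simple i) / 2) := by
  have h1 : ip ϖ x = ∑ k, cd P x k * ip ϖ (P.simple k) := by
    have h2 : ip ϖ x = ip ϖ (∑ k, cd P x k • P.simple k) :=
      congrArg (fun z => ip ϖ z) (eq_sum_cd P x)
    rw [h2, ip_sum_right]
    exact Finset.sum_congr rfl fun k _ => ip_smul_right _ _ _
  rw [h1, Finset.sum_eq_single i]
  · rw [ip_w_simple_i P hf]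
  · intro k _ hki
    rw [ip_w_simple_ne P hf hki, mul_zero]
  · intro h; exact absurd (Finset.mem_univ i) h

lemma w_ne_zero (hm : P.Minuscule ϖ) : ϖ ≠ 0 := hm.1

/-- The fundamental relation `∑_{β ∈ lay1} β = t • ϖ`. -/
lemma Sm_eq_smul (hf : P.IsFundWeight i ϖ) :
    Sm P ϖ = (ip ϖ (Sm P ϖ) / ip ϖ ϖ) • ϖ := by
  set t := ip ϖ (Sm P ϖ) / ip ϖ ϖ with htdef
  set x := Sm P ϖ - t • ϖ with hxdef
  have hϖ0 : ϖ ≠ 0 := by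
    intro h
    have := hf i
    rw [if_pos rfl, h] at this
    rw [pairing_def] at this
    simp [ip] at this
  have hϖip := ip_self_pos hϖ0
  have hipxw : ip ϖ x = 0 := by
    rw [hxdef, ip_sub_right, ip_smul_right, htdef]
    have : ip ϖ (Sm P ϖ) / ip ϖ ϖ * ip ϖ ϖ = ip ϖ (Sm P ϖ) := by
      field_simp
    rw [this, sub_self]
  have hcdxi : cd P x i = 0 := by
    have := ip_w_expand P hf x
    rw [hipxw] at this
    have hsi := simple_ipsq_pos P i
    have : cd P x i * (ip (P.simple i) (P.simple i) / 2) = 0 := this.symm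
    rcases mul_eq_zero.mp this with h | h
    · exact h
    · exfalso; rw [div_eq_zero_iff] at h; rcases h with h | h <;> linarith
  have hipxs : ∀ k, k ≠ i → ip x (P.simple k) = 0 := by
    intro k hk
    rw [hxdef, ip_sub_left, ip_smul_left, ip_Sm_simple P hf hk, ip_w_simple_ne P hf hk]
    ring
  have hx0 : x = 0 := by
    have hxx : ip x x = 0 := by
      have e : ip x x = ∑ k, cd P x k * ip (P.simple k) x := by
        have h1 : ip x x = ip (∑ k, cd P x k • P.simple k) x :=
          congrArg (fun z => ip z x) (eq_sum_cd P x)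
        rw [h1, ip_sum_left]
        exact Finset.sum_congr rfl fun k _ => ip_smul_left _ _ _
      rw [e]
      apply Finset.sum_eq_zero
      intro k _
      by_cases hk : k = i
      · rw [hk, hcdxi, zero_mul]
      · rw [ip_comm, hipxs k hk, mul_zero]
    exact inner_self_eq_zero.mp hxx
  have := sub_eq_zero.mp hx0
  exact this

end MinusculeAux

namespace MinusculeAux

open RootSystemData Finset

open scoped Classical

variable {n : ℕ} (P : RootSystemData n) {i : Fin n} {ϖ : EV n}

/-! ### The invariant operator and the counting identity -/

noncomputable def Aop (P : RootSystemData n) : EV n →ₗ[ℝ] EV n where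
  toFun x := ∑ α ∈ P.Φ, (ip x α / ip α α) • α
  map_add' x y := by
    show (∑ α ∈ P.Φ, (ip (x + y) α / ip α α) • α) = _
    rw [← Finset.sum_add_distrib]
    apply Finset.sum_congr rfl
    intro α _
    rw [ip_add_left, add_div, add_smul]
  map_smul' c x := by
    show (∑ α ∈ P.Φ, (ip (c • x) α / ip α α) • α) = _
    simp only [RingHom.id_apply]
    rw [Finset.smul_sum]
    apply Finset.sum_congr rfl
    intro α _
    rw [ip_smul_left, smul_smul, mul_div_assoc]

lemma Aop_apply (x : EV n) : Aop P x = ∑ α ∈ P.Φ, (ip x α / ip α α) • α := rfl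

lemma ip_Aop_left (x y : EV n) :
    ip (Aop P x) y = ∑ α ∈ P.Φ, (ip x α / ip α α) * ip α y := by
  rw [Aop_apply, ip_sum_left]
  exact Finset.sum_congr rfl fun α _ => ip_smul_left _ _ _

lemma Aop_symm (x y : EV n) : ip (Aop P x) y = ip x (Aop P y) := by
  rw [ip_Aop_left, ip_comm x (Aop P y), ip_Aop_left]
  apply Finset.sum_congr rfl
  intro α _
  rw [ip_comm α x, ip_comm α y]
  ring

lemma rf_bij_phi {γ : EV n} (hγ : γ ∈ P.Φ) : ∀ α ∈ P.Φ, rf γ α ∈ P.Φ :=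
  fun α hα => rf_root_mem P hγ hα

lemma Aop_comm_rf {γ : EV n} (hγ : γ ∈ P.Φ) (x : EV n) :
    Aop P (rf γ x) = rf γ (Aop P x) := by
  rw [Aop_apply, Aop_apply, map_sum]
  apply Finset.sum_nbij' (i := fun α => rf γ α) (j := fun α => rf γ α)
  · intro α hα; exact rf_root_mem P hγ hα
  · intro α hα; exact rf_root_mem P hγ hα
  · intro α _; exact rf_rf _ _
  · intro α _; exact rf_rf _ _
  · intro α hα
    have h1 : ip (rf γ x) α = ip x (rf γ α) := by
      conv_lhs => rw [← rf_rf γ α]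
    -- ip (rf γ x) (rf γ (rf γ α)) = ip x (rf γ α)
      exact rf_ip γ x (rf γ α)
    have h2 : ip α α = ip (rf γ α) (rf γ α) := (rf_ip γ α α).symm
    rw [h1, h2, map_smul, rf_rf]

lemma Aop_isSymmetric : (Aop P).IsSymmetric := by
  intro x y
  exact Aop_symm P x y

/-- The invariant operator is scalar. -/
lemma Aop_scalar (hn : 1 ≤ n) : ∃ c : ℝ, ∀ x, Aop P x = c • x := by
  haveI : Nontrivial (EV n) := by
    have hpos : 0 < Module.finrank ℝ (EV n) := by
      rw [finrank_euclideanSpace_fin]; omega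
    exact Module.nontrivial_of_finrank_pos hpos
  obtain hev := (Aop_isSymmetric P).hasEigenvalue_iSup_of_finiteDimensional
  set c := (⨆ x : { x : EV n // x ≠ 0 },
    RCLike.re (inner ℝ (Aop P x) (x : EV n) : ℝ) / ‖(x : EV n)‖ ^ 2) with hcdef
  refine ⟨c, ?_⟩
  set Ey := Module.End.eigenspace (Aop P : Module.End ℝ (EV n)) c with hEy
  have hEyne : Ey ≠ ⊥ := hev
  have hstab : ∀ γ ∈ P.Φ, ∀ x ∈ Ey, rf γ x ∈ Ey := by
    intro γ hγ x hx
    rw [Module.End.mem_eigenspace_iff] at hx ⊢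
    show Aop P (rf γ x) = c • rf γ x
    rw [Aop_comm_rf P hγ x]
    have : Aop P x = c • x := hx
    rw [this, map_smul]
  have hdich : ∀ γ ∈ P.Φ, γ ∈ Ey ∨ ∀ x ∈ Ey, ip x γ = 0 := by
    intro γ hγ
    by_cases h : ∃ x ∈ Ey, ip x γ ≠ 0
    · left
      obtain ⟨x, hx, hipx⟩ := h
      have hsub : x - rf γ x ∈ Ey := Submodule.sub_mem _ hx (hstab γ hγ x hx)
      have heq : x - rf γ x = pairing x γ • γ := by
        rw [rf_apply]
        module
      rw [heq] at hsub
      have hpne : pairing x γ ≠ 0 := by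
        intro h0
        exact hipx ((pairing_eq_zero_iff (root_ipsq_pos P hγ)).mp h0)
      have := Submodule.smul_mem Ey (pairing x γ)⁻¹ hsub
      rwa [smul_smul, inv_mul_cancel₀ hpne, one_smul] at this
    · right
      push_neg at h
      exact h
  -- the set of roots inside the eigenspace
  set s := P.Φ.filter (fun γ => γ ∈ Ey) with hs
  have hsne : s.Nonempty := by
    by_contra hempty
    rw [Finset.not_nonempty_iff_eq_empty] at hempty
    -- all roots are orthogonal to Ey, hence Ey = ⊥
    have hallorth : ∀ γ ∈ P.Φ, ∀ x ∈ Ey, ip x γ = 0 := by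
      intro γ hγ
      rcases hdich γ hγ with h | h
      · exfalso
        have : γ ∈ s := Finset.mem_filter.mpr ⟨hγ, h⟩
        rw [hempty] at this
        exact absurd this (Finset.notMem_empty γ)
      · exact h
    apply hEyne
    rw [Submodule.eq_bot_iff]
    intro x hx
    have hxorth : ∀ y : EV n, ip x y = 0 := by
      intro y
      have hy : y ∈ Submodule.span ℝ (P.Φ : Set (EV n)) := by
        rw [P.span_top]; exact Submodule.mem_top
      induction hy using Submodule.span_induction with
      | mem z hz => exact hallorth z hz x hx
      | zero => simp [ip]
      | add y z _ _ hy hz => rw [ip_add_right, hy, hz, add_zero]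
      | smul c₀ y _ hy => rw [ip_smul_right, hy, mul_zero]
    have := hxorth x
    exact inner_self_eq_zero.mp this
  have hclosed : ∀ α ∈ s, ∀ β ∈ P.Φ, ip α β ≠ 0 → β ∈ s := by
    intro α hα β hβ hip
    rw [Finset.mem_filter] at hα
    rcases hdich β hβ with h | h
    · exact Finset.mem_filter.mpr ⟨hβ, h⟩
    · exact absurd (h α hα.2) hip
  have hsub : s ⊆ P.Φ := Finset.filter_subset _ _
  have hseq : s = P.Φ := P.irred s hsub hsne hclosed
  have hEtop : Ey = ⊤ := by
    rw [eq_top_iff, ← P.span_top]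
    apply Submodule.span_le.mpr
    intro γ hγ
    have : γ ∈ s := hseq ▸ hγ
    exact (Finset.mem_filter.mp this).2
  intro x
  have hx : x ∈ Ey := hEtop ▸ Submodule.mem_top
  rwa [Module.End.mem_eigenspace_iff] at hx

/-- `Φ` is the disjoint union of `pos` and `-pos`. -/
lemma phi_eq_union : P.Φ = P.pos ∪ P.pos.image (fun β => -β) := by
  apply Finset.Subset.antisymm
  · intro α hα
    by_cases h : α ∈ P.pos
    · exact Finset.mem_union_left _ h
    · apply Finset.mem_union_right
      rw [Finset.mem_image]
      exact ⟨-α, neg_mem_pos_of_not_pos P hα h, by rw [neg_neg]⟩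
  · intro α hα
    rcases Finset.mem_union.mp hα with h | h
    · exact P.pos_subset h
    · rw [Finset.mem_image] at h
      obtain ⟨β, hβ, rfl⟩ := h
      exact P.neg_mem β (P.pos_subset hβ)

lemma disj_pos_neg : Disjoint P.pos (P.pos.image (fun β => -β)) := by
  rw [Finset.disjoint_left]
  intro β hβ hmem
  rw [Finset.mem_image] at hmem
  obtain ⟨γ, hγ, hγeq⟩ := hmem
  have : -β ∈ P.pos := by
    rw [← hγeq, neg_neg]; exact hγ
  exact not_pos_of_neg_pos P (P.pos_subset hβ) this hβ

lemma sum_phi_even (F : EV n → ℝ) (heven : ∀ α, F (-α) = F α) :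
    ∑ α ∈ P.Φ, F α = 2 * ∑ β ∈ P.pos, F β := by
  rw [phi_eq_union P, Finset.sum_union (disj_pos_neg P)]
  rw [Finset.sum_image (by intro x _ y _ h; exact neg_injective h)]
  have : ∑ β ∈ P.pos, F (-β) = ∑ β ∈ P.pos, F β :=
    Finset.sum_congr rfl fun β _ => heven β
  rw [this]
  ring

lemma expand_ip (x y : EV n) : ip x y = ∑ k, x k * y k := by
  simp only [ip]
  rw [PiLp.inner_apply]
  apply Finset.sum_congr rfl
  intro k _
  simp [RCLike.inner_apply]
  ring

/-- The main counting identity: `|Φ| = n t`. -/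
lemma card_eq_nt (hn : 1 ≤ n) (hf : P.IsFundWeight i ϖ) (hm : P.Minuscule ϖ)
    {t : ℝ} (ht : Sm P ϖ = t • ϖ) :
    (P.Φ.card : ℝ) = n * t := by
  obtain ⟨c, hc⟩ := Aop_scalar P hn
  have hϖ0 : ϖ ≠ 0 := w_ne_zero P hm
  have hϖip := ip_self_pos hϖ0
  -- evaluate at ϖ : c = t
  have hct : c = t := by
    have h1 : ip (Aop P ϖ) ϖ = c * ip ϖ ϖ := by rw [hc, ip_smul_left]
    have h2 : ip (Aop P ϖ) ϖ = t * ip ϖ ϖ := by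
      rw [ip_Aop_left]
      have heven : ∀ α : EV n, (ip ϖ (-α) / ip (-α) (-α)) * ip (-α) ϖ
          = (ip ϖ α / ip α α) * ip α ϖ := by
        intro α
        simp only [ip_neg_left, ip_neg_right, neg_neg]
        ring
      have hΦ : ∑ α ∈ P.Φ, (ip ϖ α / ip α α) * ip α ϖ
          = 2 * ∑ β ∈ P.pos, (ip ϖ β / ip β β) * ip β ϖ :=
        sum_phi_even P _ heven
      have hpos : ∑ β ∈ P.pos, (ip ϖ β / ip β β) * ip β ϖ
          = ∑ β ∈ lay1 P ϖ, ip ϖ β / 2 := by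
        rw [lay1, Finset.sum_filter]
        apply Finset.sum_congr rfl
        intro β hβ
        rcases pairing_w_mem P hf hm hβ with h0 | h1
        · have hip0 : ip ϖ β = 0 :=
            (pairing_eq_zero_iff (root_ipsq_pos P (P.pos_subset hβ))).mp h0
          rw [if_neg (by rw [h0]; norm_num), hip0]
          ring
        · rw [if_pos h1]
          rw [pairing_def] at h1
          have hβip := root_ipsq_pos P (P.pos_subset hβ)
          have h2 : 2 * ip ϖ β = ip β β := by
            field_simp at h1
            linarith
          have hw : ip ϖ β = ip β β / 2 := by linarith
          rw [ip_comm β ϖ, hw]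
          field_simp
      have hSm : ∑ β ∈ lay1 P ϖ, ip ϖ β / 2 = ip ϖ (Sm P ϖ) / 2 := by
        rw [Sm, ip_sum_right]
        rw [Finset.sum_div]
      rw [hΦ, hpos, hSm, ht, ip_smul_right]
      ring
    rw [h1] at h2
    exact mul_right_cancel₀ (ne_of_gt hϖip) h2
  -- trace identity
  set e : Fin n → EV n := fun k => EuclideanSpace.single k (1:ℝ) with he
  have htr1 : ∑ k, ip (Aop P (e k)) (e k) = n * c := by
    have : ∀ k, ip (Aop P (e k)) (e k) = c := by
      intro k
      rw [hc, ip_smul_left]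
      have : ip (e k) (e k) = 1 := by
        rw [expand_ip]
        simp [he, EuclideanSpace.single_apply]
      rw [this, mul_one]
    rw [Finset.sum_congr rfl fun k _ => this k]
    simp [Finset.card_univ]
  have htr2 : ∑ k, ip (Aop P (e k)) (e k) = P.Φ.card := by
    have hterm : ∀ k, ip (Aop P (e k)) (e k)
        = ∑ α ∈ P.Φ, (ip (e k) α / ip α α) * ip α (e k) := fun k => ip_Aop_left P _ _
    rw [Finset.sum_congr rfl fun k _ => hterm k]
    rw [Finset.sum_comm]
    have hα : ∀ α ∈ P.Φ, ∑ k, (ip (e k) α / ip α α) * ip α (e k) = 1 := by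
      intro α hα
      have hip := root_ipsq_pos P hα
      have hsingle : ∀ k, ip (e k) α = α k := by
        intro k
        rw [expand_ip]
        rw [Finset.sum_eq_single k]
        · simp [he, EuclideanSpace.single_apply]
        · intro m _ hmk
          have : e k m = 0 := by
            simp only [he]
            rw [EuclideanSpace.single_apply, if_neg hmk]
          rw [this, zero_mul]
        · intro h; exact absurd (Finset.mem_univ k) h
      have hii : ∑ k, α k * α k = ip α α := (expand_ip α α).symm
      calc ∑ k, (ip (e k) α / ip α α) * ip α (e k)
          = ∑ k, (α k * α k) / ip α α := by
            apply Finset.sum_congr rfl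
            intro k _
            rw [hsingle k, ip_comm α (e k), hsingle k]
            ring
        _ = (∑ k, α k * α k) / ip α α := by rw [Finset.sum_div]
        _ = 1 := by rw [hii]; field_simp
    rw [Finset.sum_congr rfl hα]
    simp
  rw [htr2] at htr1
  rw [htr1, hct]

end MinusculeAux

namespace MinusculeAux

open RootSystemData Finset

open scoped Classical

variable {n : ℕ} (P : RootSystemData n) {i : Fin n} {ϖ : EV n}

/-! ### The longest element of the parabolic Weyl group, as a minimizer -/

lemma rf_selfadj (γ x y : EV n) : ip (rf γ x) y = ip x (rf γ y) := by
  calc ip (rf γ x) y = ip (rf γ x) (rf γ (rf γ y)) := by rw [rf_rf]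
    _ = ip x (rf γ y) := rf_ip γ x (rf γ y)

noncomputable def rfE (γ : EV n) : EV n ≃ₗᵢ[ℝ] EV n where
  toLinearEquiv := LinearEquiv.ofInvolutive (rf γ) (fun x => rf_rf γ x)
  norm_map' x := by
    show ‖rf γ x‖ = ‖x‖
    rw [norm_eq_sqrt_real_inner, norm_eq_sqrt_real_inner]
    congr 1
    exact rf_ip γ x x

lemma rfE_apply (γ x : EV n) : rfE γ x = rf γ x := rfl

lemma isom_ip (g : EV n ≃ₗᵢ[ℝ] EV n) (x y : EV n) : ip (g x) (g y) = ip x y :=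
  g.inner_map_map x y

/-- The parabolic Weyl group. -/
noncomputable def Wi (P : RootSystemData n) (i : Fin n) : Subgroup (EV n ≃ₗᵢ[ℝ] EV n) :=
  Subgroup.closure {g | ∃ j, j ≠ i ∧ g = rfE (P.simple j)}

lemma Wi_maps_phi : ∀ g ∈ Wi P i, ∀ α ∈ P.Φ, g α ∈ P.Φ := by
  intro g hg
  induction hg using Subgroup.closure_induction with
  | mem g hgmem =>
      obtain ⟨j, _, rfl⟩ := hgmem
      intro α hα
      rw [rfE_apply]
      exact rf_root_mem P (simple_mem P) hα
  | one => exact fun α hα => hα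
  | mul g h _ _ ihg ihh =>
      intro α hα
      rw [LinearIsometryEquiv.coe_mul, Function.comp_apply]
      exact ihg _ (ihh α hα)
  | inv g _ ihg =>
      have himg : P.Φ.image (fun α => g α) = P.Φ := by
        apply Finset.eq_of_subset_of_card_le
        · intro α hα
          rw [Finset.mem_image] at hα
          obtain ⟨β, hβ, rfl⟩ := hα
          exact ihg β hβ
        · rw [Finset.card_image_of_injective _ g.injective]
      intro α hα
      rw [← himg, Finset.mem_image] at hα
      obtain ⟨β, hβ, rfl⟩ := hα
      rw [LinearIsometryEquiv.coe_inv, g.symm_apply_apply]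
      exact hβ

lemma Wi_fixes_w (hf : P.IsFundWeight i ϖ) : ∀ g ∈ Wi P i, g ϖ = ϖ := by
  intro g hg
  induction hg using Subgroup.closure_induction with
  | mem g hgmem =>
      obtain ⟨j, hj, rfl⟩ := hgmem
      rw [rfE_apply, rf_apply, hf j, if_neg hj, zero_smul, sub_zero]
  | one => rfl
  | mul g h _ _ ihg ihh =>
      rw [LinearIsometryEquiv.coe_mul, Function.comp_apply, ihh, ihg]
  | inv g _ ihg =>
      rw [LinearIsometryEquiv.coe_inv]
      conv_lhs => rw [← ihg]
      exact g.symm_apply_apply ϖ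

lemma g_rho_expand (g : EV n ≃ₗᵢ[ℝ] EV n) :
    g P.rho = ∑ j, cd P P.rho j • g (P.simple j) := by
  have h1 : g P.rho = g (∑ j, cd P P.rho j • P.simple j) :=
    congrArg (fun z => g z) (eq_sum_cd P P.rho)
  rw [h1, map_sum]
  exact Finset.sum_congr rfl fun j _ => by rw [map_smul]

/-- The orbit of `ρ` under the parabolic Weyl group is finite. -/
lemma orbit_finite : Set.Finite {x : EV n | ∃ g ∈ Wi P i, g P.rho = x} := by
  have hfin : Set.Finite ((fun f : Fin n → EV n => ∑ j, cd P P.rho j • f j) ''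
      (Set.pi Set.univ fun _ : Fin n => (P.Φ : Set (EV n)))) :=
    Set.Finite.image _ (Set.Finite.pi fun _ => P.Φ.finite_toSet)
  apply hfin.subset
  rintro x ⟨g, hg, rfl⟩
  refine ⟨fun j => g (P.simple j), ?_, (g_rho_expand P g).symm⟩
  intro j _
  exact Wi_maps_phi P g hg (P.simple j) (simple_mem P)

/-- Key properties of a minimizer of `⟨gρ, ρ⟩` over the parabolic Weyl group. -/
lemma minimizer_neg (v : EV n ≃ₗᵢ[ℝ] EV n) (hv : v ∈ Wi P i)
    (hmin : ∀ g ∈ Wi P i, ip (v P.rho) P.rho ≤ ip (g P.rho) P.rho) :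
    ∀ j, j ≠ i → ip (v P.rho) (P.simple j) < 0 := by
  intro j hj
  have hgen : rfE (P.simple j) ∈ Wi P i :=
    Subgroup.subset_closure ⟨j, hj, rfl⟩
  have hcomp : (rfE (P.simple j) * v) P.rho = rf (P.simple j) (v P.rho) := by
    rw [LinearIsometryEquiv.coe_mul, Function.comp_apply, rfE_apply]
  have hle := hmin _ (Subgroup.mul_mem _ hgen hv)
  rw [hcomp] at hle
  have heq : ip (rf (P.simple j) (v P.rho)) P.rho
      = ip (v P.rho) P.rho - ip (v P.rho) (P.simple j) := by
    rw [rf_selfadj, rf_rho, ip_sub_right]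
  rw [heq] at hle
  have hle2 : ip (v P.rho) (P.simple j) ≤ 0 := by linarith
  have hne : ip (v P.rho) (P.simple j) ≠ 0 := by
    have h1 := isom_ip v P.rho (v⁻¹ (P.simple j))
    rw [LinearIsometryEquiv.coe_inv, v.apply_symm_apply] at h1
    rw [h1]
    have hmem : v⁻¹ (P.simple j) ∈ P.Φ :=
      Wi_maps_phi P v⁻¹ (Subgroup.inv_mem _ hv) _ (simple_mem P)
    rw [LinearIsometryEquiv.coe_inv] at hmem
    exact ip_rho_ne_zero P hmem
  exact lt_of_le_of_ne hle2 hne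

/-- Layer-zero positive roots. -/
noncomputable def lay0 (P : RootSystemData n) (ϖ : EV n) : Finset (EV n) :=
  P.pos.filter fun β => pairing ϖ β = 0

lemma pos_eq_union (hf : P.IsFundWeight i ϖ) (hm : P.Minuscule ϖ) :
    P.pos = lay0 P ϖ ∪ lay1 P ϖ := by
  apply Finset.Subset.antisymm
  · intro β hβ
    rcases pairing_w_mem P hf hm hβ with h | h
    · exact Finset.mem_union_left _ (Finset.mem_filter.mpr ⟨hβ, h⟩)
    · exact Finset.mem_union_right _ (Finset.mem_filter.mpr ⟨hβ, h⟩)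
  · intro β hβ
    rcases Finset.mem_union.mp hβ with h | h
    · exact (Finset.mem_filter.mp h).1
    · exact (Finset.mem_filter.mp h).1

lemma disj_lay : Disjoint (lay0 P ϖ) (lay1 P ϖ) := by
  rw [Finset.disjoint_left]
  intro β h0 h1
  rw [lay0, Finset.mem_filter] at h0
  rw [mem_lay1] at h1
  rw [h0.2] at h1
  norm_num at h1

/-- Pairing with `ϖ` is preserved by elements of the parabolic Weyl group. -/
lemma pairing_w_g (hf : P.IsFundWeight i ϖ) (g : EV n ≃ₗᵢ[ℝ] EV n) (hg : g ∈ Wi P i)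
    (β : EV n) : pairing ϖ (g β) = pairing ϖ β := by
  have h1 : ip ϖ (g β) = ip ϖ β := by
    conv_lhs => rw [show ϖ = g ϖ by rw [Wi_fixes_w P hf g hg]]
    exact isom_ip g ϖ β
  have h2 : ip (g β) (g β) = ip β β := isom_ip g β β
  rw [pairing_def, pairing_def, h1, h2]

lemma g_lay1_mem (hf : P.IsFundWeight i ϖ) (g : EV n ≃ₗᵢ[ℝ] EV n) (hg : g ∈ Wi P i)
    {β : EV n} (hβ : β ∈ lay1 P ϖ) : g β ∈ lay1 P ϖ := by
  rw [mem_lay1] at hβ ⊢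
  have hβΦ := pos_root_mem P hβ.1
  have hgβΦ : g β ∈ P.Φ := Wi_maps_phi P g hg β hβΦ
  have hp : pairing ϖ (g β) = 1 := by rw [pairing_w_g P hf g hg]; exact hβ.2
  refine ⟨?_, hp⟩
  have hip : 0 < ip ϖ (g β) := by
    have := (pairing_pos_iff (root_ipsq_pos P hgβΦ)).mp (by rw [hp]; norm_num)
    exact this
  by_contra hneg
  have hnd := neg_mem_pos_of_not_pos P hgβΦ hneg
  have := ip_w_nonneg P hf hnd
  rw [ip_neg_right] at this
  linarith

lemma sum_lay1_g (hf : P.IsFundWeight i ϖ) (g : EV n ≃ₗᵢ[ℝ] EV n) (hg : g ∈ Wi P i) :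
    ∑ β ∈ lay1 P ϖ, g β = Sm P ϖ := by
  have himg : (lay1 P ϖ).image (fun β => g β) = lay1 P ϖ := by
    apply Finset.eq_of_subset_of_card_le
    · intro β hβ
      rw [Finset.mem_image] at hβ
      obtain ⟨γ, hγ, rfl⟩ := hβ
      exact g_lay1_mem P hf g hg hγ
    · rw [Finset.card_image_of_injective _ g.injective]
  have hsum : ∑ x ∈ (lay1 P ϖ).image (fun β => g β), x = ∑ β ∈ lay1 P ϖ, g β :=
    Finset.sum_image (fun x _ y _ h => g.injective h)
  rw [himg] at hsum
  rw [Sm]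
  exact hsum.symm

/-- A minimizer sends layer-zero positive roots to negative roots. -/
lemma minimizer_lay0 (hf : P.IsFundWeight i ϖ)
    (v : EV n ≃ₗᵢ[ℝ] EV n) (hv : v ∈ Wi P i)
    (hmin : ∀ g ∈ Wi P i, ip (v P.rho) P.rho ≤ ip (g P.rho) P.rho)
    {β : EV n} (hβ : β ∈ lay0 P ϖ) : -(v β) ∈ lay0 P ϖ := by
  rw [lay0, Finset.mem_filter] at hβ
  obtain ⟨hβpos, hβ0⟩ := hβ
  have hβΦ := pos_root_mem P hβpos
  have hvβΦ : v β ∈ P.Φ := Wi_maps_phi P v hv β hβΦ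
  -- v⁻¹ is also a minimizer
  have hminv : ∀ g ∈ Wi P i, ip (v⁻¹ P.rho) P.rho ≤ ip (g P.rho) P.rho := by
    have hval : ip (v⁻¹ P.rho) P.rho = ip (v P.rho) P.rho := by
      have h := isom_ip v (v⁻¹ P.rho) P.rho
      rw [LinearIsometryEquiv.coe_inv, v.apply_symm_apply] at h
      rw [LinearIsometryEquiv.coe_inv, ← h, ip_comm]
    intro g hg
    rw [hval]
    exact hmin g hg
  have hvinvneg := minimizer_neg P v⁻¹ (Subgroup.inv_mem _ hv) hminv
  -- cd of β at i vanishes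
  have hcdi : cd P β i = 0 := by
    have hip0 : ip ϖ β = 0 :=
      (pairing_eq_zero_iff (root_ipsq_pos P hβΦ)).mp hβ0
    have := ip_w_expand P hf β
    rw [hip0] at this
    have hsi := simple_ipsq_pos P i
    rcases mul_eq_zero.mp this.symm with h | h
    · exact h
    · exfalso; rw [div_eq_zero_iff] at h; rcases h with h | h <;> linarith
  -- ⟨ρ, vβ⟩ < 0
  have hneg : ip P.rho (v β) < 0 := by
    have h1 : ip P.rho (v β) = ip (v⁻¹ P.rho) β := by
      have h := isom_ip v (v⁻¹ P.rho) β
      rw [LinearIsometryEquiv.coe_inv, v.apply_symm_apply] at h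
      rw [LinearIsometryEquiv.coe_inv, ← h]
    rw [h1]
    have hexpand : ip (v⁻¹ P.rho) β = ∑ k, cd P β k * ip (v⁻¹ P.rho) (P.simple k) := by
      have h2 : ip (v⁻¹ P.rho) β = ip (v⁻¹ P.rho) (∑ k, cd P β k • P.simple k) :=
        congrArg (fun z => ip (v⁻¹ P.rho) z) (eq_sum_cd P β)
      rw [h2, ip_sum_right]
      exact Finset.sum_congr rfl fun k _ => ip_smul_right _ _ _
    rw [hexpand]
    obtain ⟨k₀, hk₀⟩ := pos_cd_exists_pos P hβpos
    have hk₀i : k₀ ≠ i := by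
      intro h
      rw [h, hcdi] at hk₀
      exact lt_irrefl _ hk₀
    have hterm : ∀ k, cd P β k * ip (v⁻¹ P.rho) (P.simple k) ≤ 0 := by
      intro k
      by_cases hk : k = i
      · rw [hk, hcdi, zero_mul]
      · exact mul_nonpos_of_nonneg_of_nonpos (pos_cd_nonneg P hβpos k)
          (le_of_lt (hvinvneg k hk))
    have hterm0 : cd P β k₀ * ip (v⁻¹ P.rho) (P.simple k₀) < 0 :=
      mul_neg_of_pos_of_neg hk₀ (hvinvneg k₀ hk₀i)
    have hsplit : ∑ k, cd P β k * ip (v⁻¹ P.rho) (P.simple k)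
        = cd P β k₀ * ip (v⁻¹ P.rho) (P.simple k₀)
          + ∑ k ∈ Finset.univ.erase k₀, cd P β k * ip (v⁻¹ P.rho) (P.simple k) :=
      (Finset.add_sum_erase _ _ (Finset.mem_univ k₀)).symm
    have hrest : ∑ k ∈ Finset.univ.erase k₀, cd P β k * ip (v⁻¹ P.rho) (P.simple k) ≤ 0 :=
      Finset.sum_nonpos fun k _ => hterm k
    rw [hsplit]
    linarith
  have hvnp : v β ∉ P.pos := by
    rw [mem_pos_iff_ip_rho P hvβΦ]
    linarith
  have hnvpos : -(v β) ∈ P.pos := neg_mem_pos_of_not_pos P hvβΦ hvnp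
  rw [lay0, Finset.mem_filter]
  refine ⟨hnvpos, ?_⟩
  have hp0 : pairing ϖ (v β) = 0 := by rw [pairing_w_g P hf v hv]; exact hβ0
  have hip0 : ip ϖ (v β) = 0 := (pairing_eq_zero_iff (root_ipsq_pos P hvβΦ)).mp hp0
  apply (pairing_eq_zero_iff (root_ipsq_pos P (P.neg_mem _ hvβΦ))).mpr
  rw [ip_neg_right, hip0, neg_zero]

lemma sum_lay0_minimizer (hf : P.IsFundWeight i ϖ)
    (v : EV n ≃ₗᵢ[ℝ] EV n) (hv : v ∈ Wi P i)
    (hmin : ∀ g ∈ Wi P i, ip (v P.rho) P.rho ≤ ip (g P.rho) P.rho) :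
    ∑ β ∈ lay0 P ϖ, v β = -∑ β ∈ lay0 P ϖ, β := by
  have himg : (lay0 P ϖ).image (fun β => -(v β)) = lay0 P ϖ := by
    apply Finset.eq_of_subset_of_card_le
    · intro β hβ
      rw [Finset.mem_image] at hβ
      obtain ⟨γ, hγ, rfl⟩ := hβ
      exact minimizer_lay0 P hf v hv hmin hγ
    · rw [Finset.card_image_of_injective]
      intro x y hxy
      exact v.injective (neg_injective hxy)
  have hsum : ∑ x ∈ (lay0 P ϖ).image (fun β => -(v β)), x = ∑ β ∈ lay0 P ϖ, -(v β) :=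
    Finset.sum_image (fun x _ y _ h => v.injective (neg_injective h))
  rw [himg] at hsum
  rw [Finset.sum_neg_distrib] at hsum
  have := congrArg Neg.neg hsum
  rw [neg_neg] at this
  exact this.symm

/-- A minimizer sends `ρ` to `Sm - ρ`. -/
lemma minimizer_rho (hf : P.IsFundWeight i ϖ) (hm : P.Minuscule ϖ)
    (v : EV n ≃ₗᵢ[ℝ] EV n) (hv : v ∈ Wi P i)
    (hmin : ∀ g ∈ Wi P i, ip (v P.rho) P.rho ≤ ip (g P.rho) P.rho) :
    v P.rho = Sm P ϖ - P.rho := by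
  have hρ : P.rho = (2⁻¹ : ℝ) • ∑ β ∈ P.pos, β := rfl
  have hsplit : ∑ β ∈ P.pos, β = (∑ β ∈ lay0 P ϖ, β) + Sm P ϖ := by
    rw [pos_eq_union P hf hm, Finset.sum_union (disj_lay P), Sm]
  have hsplitv : ∑ β ∈ P.pos, v β = (∑ β ∈ lay0 P ϖ, v β) + ∑ β ∈ lay1 P ϖ, v β := by
    rw [pos_eq_union P hf hm, Finset.sum_union (disj_lay P)]
  have h1 : v P.rho = (2⁻¹ : ℝ) • ∑ β ∈ P.pos, v β := by
    rw [hρ, map_smul, map_sum]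
  rw [h1, hsplitv, sum_lay0_minimizer P hf v hv hmin, sum_lay1_g P hf v hv]
  rw [hρ, hsplit]
  module

/-- Packaged: existence of the height-reversing self-map of layer one. -/
lemma exists_v (hf : P.IsFundWeight i ϖ) (hm : P.Minuscule ϖ) {t : ℝ}
    (ht : Sm P ϖ = t • ϖ) :
    ∃ v : EV n → EV n, (∀ β ∈ lay1 P ϖ, v β ∈ lay1 P ϖ) ∧
      ∀ β ∈ lay1 P ϖ, pairing P.rho (v β) = t - pairing P.rho β := by
  obtain ⟨x₀, hx₀O, hx₀min⟩ := Finset.exists_min_image (orbit_finite P (i := i)).toFinset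
    (fun x => ip x P.rho)
    ⟨P.rho, by
      rw [Set.Finite.mem_toFinset]
      exact ⟨1, Subgroup.one_mem _, rfl⟩⟩
  rw [Set.Finite.mem_toFinset] at hx₀O
  obtain ⟨v, hv, hvρ⟩ := hx₀O
  have hmin : ∀ g ∈ Wi P i, ip (v P.rho) P.rho ≤ ip (g P.rho) P.rho := by
    intro g hg
    rw [hvρ]
    apply hx₀min
    rw [Set.Finite.mem_toFinset]
    exact ⟨g, hg, rfl⟩
  -- v⁻¹ is also a minimizer
  have hminv : ∀ g ∈ Wi P i, ip (v⁻¹ P.rho) P.rho ≤ ip (g P.rho) P.rho := by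
    have hval : ip (v⁻¹ P.rho) P.rho = ip (v P.rho) P.rho := by
      have h := isom_ip v (v⁻¹ P.rho) P.rho
      rw [LinearIsometryEquiv.coe_inv, v.apply_symm_apply] at h
      rw [LinearIsometryEquiv.coe_inv, ← h, ip_comm]
    intro g hg
    rw [hval]
    exact hmin g hg
  have hvinvρ : v⁻¹ P.rho = Sm P ϖ - P.rho :=
    minimizer_rho P hf hm v⁻¹ (Subgroup.inv_mem _ hv) hminv
  refine ⟨fun x => v x, fun β hβ => g_lay1_mem P hf v hv hβ, ?_⟩
  intro β hβ
  rw [mem_lay1] at hβ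
  have hβΦ := pos_root_mem P hβ.1
  have hvβΦ : v β ∈ P.Φ := Wi_maps_phi P v hv β hβΦ
  have h1 : ip P.rho (v β) = ip (v⁻¹ P.rho) β := by
    have h := isom_ip v (v⁻¹ P.rho) β
    rw [LinearIsometryEquiv.coe_inv, v.apply_symm_apply] at h
    rw [LinearIsometryEquiv.coe_inv, ← h]
  have h2 : ip (v β) (v β) = ip β β := isom_ip v β β
  rw [pairing_def, h1, h2, hvinvρ]
  have h3 : ip (Sm P ϖ - P.rho) β = t * ip ϖ β - ip P.rho β := by
    rw [ip_sub_left, ht, ip_smul_left]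
  rw [h3]
  have h4 : 2 * ip ϖ β / ip β β = 1 := by rw [← pairing_def]; exact hβ.2
  have hβip := root_ipsq_pos P hβΦ
  rw [pairing_def]
  field_simp
  field_simp at h4
  linear_combination t * h4

end MinusculeAux

namespace MinusculeAux

open RootSystemData Finset

open scoped Classical

variable {n : ℕ} (P : RootSystemData n) {i : Fin n} {ϖ : EV n}

/-! ### Heights as natural numbers, and the interval property -/

lemma pairing_nonpos_iff {x α : EV n} (hα : 0 < ip α α) : pairing x α ≤ 0 ↔ ip x α ≤ 0 := by
  constructor
  · intro h
    by_contra h'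
    push_neg at h'
    have := (pairing_pos_iff hα).mpr h'
    linarith
  · intro h
    by_contra h'
    push_neg at h'
    have := (pairing_pos_iff hα).mp h'
    linarith

lemma exists_ip_simple_pos {β : EV n} (hβ : β ∈ P.pos) : ∃ j, 0 < ip (P.simple j) β := by
  have hβΦ := pos_root_mem P hβ
  by_contra hcon
  push_neg at hcon
  have h0 : ip β β ≤ 0 := by
    have e : ip β β = ∑ k, cd P β k * ip (P.simple k) β := by
      have h1 : ip β β = ip (∑ j, cd P β j • P.simple j) β :=
        congrArg (fun z => ip z β) (eq_sum_cd P β)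
      rw [h1, ip_sum_left]
      exact Finset.sum_congr rfl fun k _ => ip_smul_left _ _ _
    rw [e]
    apply Finset.sum_nonpos
    intro k _
    exact mul_nonpos_of_nonneg_of_nonpos (pos_cd_nonneg P hβ k) (hcon k)
  linarith [ip_self_pos (root_ne_zero P hβΦ)]

noncomputable def htN (P : RootSystemData n) (β : EV n) : ℕ :=
  if h : β ∈ P.pos then (ht_nat P h).choose else 0

lemma htN_spec {β : EV n} (hβ : β ∈ P.pos) :
    1 ≤ htN P β ∧ pairing P.rho β = (htN P β : ℝ) := by
  rw [htN, dif_pos hβ]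
  exact ⟨(ht_nat P hβ).choose_spec.1, (ht_nat P hβ).choose_spec.2⟩

lemma htN_eq {β : EV n} (hβ : β ∈ P.pos) {m : ℕ} (h : pairing P.rho β = (m : ℝ)) :
    htN P β = m := by
  have := (htN_spec P hβ).2
  rw [h] at this
  exact_mod_cast this.symm

lemma htN_simple (j : Fin n) : htN P (P.simple j) = 1 :=
  htN_eq P (P.simple_mem_pos j) (by rw [pairing_rho_simple]; norm_num)

/-- The interval property: every height between 1 and the maximum is attained in layer one. -/
lemma interval_property (hf : P.IsFundWeight i ϖ) (hm : P.Minuscule ϖ)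
    {t : ℝ} (ht : Sm P ϖ = t • ϖ)
    {βm : EV n} (hβm : βm ∈ lay1 P ϖ) (hβmmax : ∀ γ ∈ lay1 P ϖ, htN P γ ≤ htN P βm)
    (htM : t = (htN P βm : ℝ) + 1) :
    ∀ m : ℕ, 1 ≤ m → m ≤ htN P βm → ∃ β ∈ lay1 P ϖ, htN P β = m := by
  obtain ⟨v, hv1, hv2⟩ := exists_v P hf hm ht
  set M := htN P βm with hMdef
  -- heights are reversed by v
  have hvht : ∀ β ∈ lay1 P ϖ, htN P (v β) = M + 1 - htN P β ∧ htN P β ≤ M := by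
    intro β hβ
    have hβpos := (mem_lay1 P).mp hβ |>.1
    have hvβ := hv1 β hβ
    have hvβpos := (mem_lay1 P).mp hvβ |>.1
    have hle : htN P β ≤ M := hβmmax β hβ
    have h2 := hv2 β hβ
    rw [(htN_spec P hβpos).2, htM] at h2
    have : pairing P.rho (v β) = ((M + 1 - htN P β : ℕ) : ℝ) := by
      rw [h2]
      have h1 : 1 ≤ htN P β := (htN_spec P hβpos).1
      push_cast [Nat.cast_sub (by omega : htN P β ≤ M + 1)]
      ring
    exact ⟨htN_eq P hvβpos this, hle⟩
  by_contra hcon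
  push_neg at hcon
  obtain ⟨g', hg'1, hg'M, hg'gap⟩ := hcon
  -- the set of gaps
  set gset := (Finset.range (M + 2)).filter
    (fun m => 1 ≤ m ∧ m ≤ M ∧ ∀ β ∈ lay1 P ϖ, htN P β ≠ m) with hgset
  have hg'mem : g' ∈ gset := by
    rw [hgset, Finset.mem_filter, Finset.mem_range]
    exact ⟨by omega, hg'1, hg'M, hg'gap⟩
  obtain ⟨g, hgmem, hgmin⟩ := Finset.exists_min_image gset id ⟨g', hg'mem⟩
  rw [hgset, Finset.mem_filter, Finset.mem_range] at hgmem
  obtain ⟨hgrange, hg1, hgM, hggap⟩ := hgmem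
  -- g ≥ 2 since height 1 is attained
  have hg2 : 2 ≤ g := by
    rcases Nat.lt_or_ge g 2 with h | h
    · exfalso
      have : g = 1 := by omega
      exact hggap (P.simple i) (simple_i_mem_lay1 P hf) (by rw [htN_simple, this])
    · exact h
  -- the symmetric value M + 1 - g is also a gap
  have hsymgap : ∀ β ∈ lay1 P ϖ, htN P β ≠ M + 1 - g := by
    intro β hβ heq
    have := (hvht β hβ).1
    rw [heq] at this
    have hval : M + 1 - (M + 1 - g) = g := by omega
    rw [hval] at this
    exact hggap (v β) (hv1 β hβ) this
  have hsymmem : M + 1 - g ∈ gset := by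
    rw [hgset, Finset.mem_filter, Finset.mem_range]
    refine ⟨by omega, by omega, by omega, hsymgap⟩
  have h2g : 2 * g ≤ M + 1 := by
    have := hgmin _ hsymmem
    simp only [id] at this
    omega
  -- g - 1 is attained
  have hgm1 : ∃ β ∈ lay1 P ϖ, htN P β = g - 1 := by
    by_contra hno
    push_neg at hno
    have : g - 1 ∈ gset := by
      rw [hgset, Finset.mem_filter, Finset.mem_range]
      exact ⟨by omega, by omega, by omega, hno⟩
    have := hgmin _ this
    simp only [id] at this
    omega
  obtain ⟨β₁, hβ₁, hβ₁ht⟩ := hgm1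
  -- b := v β₁ has height K = M + 2 - g, and K - 1 is a gap
  set b := v β₁ with hbdef
  have hblay1 : b ∈ lay1 P ϖ := hv1 β₁ hβ₁
  have hbK : htN P b = M + 2 - g := by
    have := (hvht β₁ hβ₁).1
    rw [hβ₁ht] at this
    rw [hbdef, this]
    omega
  set K := M + 2 - g with hKdef
  have hK2 : 2 ≤ K := by omega
  have hKgap : ∀ β ∈ lay1 P ϖ, htN P β ≠ K - 1 := by
    have : K - 1 = M + 1 - g := by omega
    rw [this]
    exact hsymgap
  -- extract data about b
  have hbpos := ((mem_lay1 P).mp hblay1).1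
  have hbw : pairing ϖ b = 1 := ((mem_lay1 P).mp hblay1).2
  have hbΦ := pos_root_mem P hbpos
  have hbip := root_ipsq_pos P hbΦ
  have hbht : pairing P.rho b = (K : ℝ) := by
    rw [(htN_spec P hbpos).2, hbK]
  -- (i) no descent by a non-i simple coroot
  have hnodesc : ∀ j, j ≠ i → ¬∃ δ ∈ P.Φ, coroot δ = coroot b - coroot (P.simple j) := by
    rintro j hj ⟨δ, hδΦ, hδeq⟩
    have hδw : pairing ϖ δ = 1 := by
      rw [← ip_coroot, hδeq, ip_sub_right, ip_coroot, ip_coroot, hbw, hf j, if_neg hj,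
        sub_zero]
    have hδpos : δ ∈ P.pos := by
      have hip : 0 < ip ϖ δ :=
        (pairing_pos_iff (root_ipsq_pos P hδΦ)).mp (by rw [hδw]; norm_num)
      by_contra hneg
      have hnd := neg_mem_pos_of_not_pos P hδΦ hneg
      have := ip_w_nonneg P hf hnd
      rw [ip_neg_right] at this
      linarith
    have hδlay1 : δ ∈ lay1 P ϖ := (mem_lay1 P).mpr ⟨hδpos, hδw⟩
    have hδht : pairing P.rho δ = (K : ℝ) - 1 := by
      rw [← ip_coroot, hδeq, ip_sub_right, ip_coroot, ip_coroot, hbht, pairing_rho_simple]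
    have : htN P δ = K - 1 :=
      htN_eq P hδpos (by rw [hδht]; push_cast [Nat.cast_sub (by omega : 1 ≤ K)]; ring)
    exact hKgap δ hδlay1 this
  -- (ii) hence all inner products with non-i simple roots are ≤ 0
  have hipnonpos : ∀ j, j ≠ i → ip b (P.simple j) ≤ 0 := by
    intro j hj
    by_contra hpos
    push_neg at hpos
    have hne : b ≠ P.simple j := by
      intro h
      have := hbK
      rw [h, htN_simple] at this
      omega
    have hnneg : b ≠ -P.simple j := by
      intro h
      exact not_pos_of_neg_pos P hbΦ (by rw [h]; simpa using P.simple_mem_pos j) hbpos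
    have hnp := not_parallel P hbΦ (simple_mem P) hne hnneg
    exact hnodesc j hj (coroot_sub_mem P hbΦ (simple_mem P) hpos hnp)
  -- (iii) the inner product with the i-th simple root is positive
  have hipbi : 0 < ip b (P.simple i) := by
    obtain ⟨j, hj⟩ := exists_ip_simple_pos P hbpos
    by_cases h : j = i
    · rw [← h]; rw [ip_comm]; exact hj
    · exfalso
      have := hipnonpos j h
      rw [ip_comm] at hj
      linarith
  -- (iv) case analysis on p' = pairing b (s i)
  have hne : b ≠ P.simple i := by
    intro h
    have := hbK
    rw [h, htN_simple] at this
    omega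
  have hnneg : b ≠ -P.simple i := by
    intro h
    exact not_pos_of_neg_pos P hbΦ (by rw [h]; simpa using P.simple_mem_pos i) hbpos
  have hnp := not_parallel P hbΦ (simple_mem P) hne hnneg
  by_cases hp : pairing b (P.simple i) ≤ 1
  · -- dominant case: contradiction with minusculity
    apply not_dominant_sub P hm hbpos
    intro j
    rw [pairing_sub_left, hf j]
    by_cases hji : j = i
    · rw [if_pos hji, hji]
      linarith
    · rw [if_neg hji]
      have := (pairing_nonpos_iff (simple_ipsq_pos P j)).mpr (hipnonpos j hji)
      linarith
  · push_neg at hp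
    obtain ⟨kp, hkp⟩ := P.pair_int b hbΦ (P.simple i) (simple_mem P)
    have hp2 : (2:ℝ) ≤ pairing b (P.simple i) := by
      rw [hkp]
      have : 1 < kp := by exact_mod_cast hkp ▸ hp
      exact_mod_cast this
    -- q = 1
    obtain ⟨kq, hkq⟩ := P.pair_int (P.simple i) (simple_mem P) b hbΦ
    have hq1 : pairing (P.simple i) b = 1 := by
      have hqpos : 0 < pairing (P.simple i) b := by
        refine (pairing_pos_iff hbip).mpr ?_
        rw [ip_comm]; exact hipbi
      have hkqpos : 0 < kq := by exact_mod_cast hkq ▸ hqpos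
      have hprod : pairing b (P.simple i) * pairing (P.simple i) b < 4 :=
        pairing_mul_lt_four P hbΦ (simple_mem P) hnp
      have : (kp : ℝ) * kq < 4 := by rw [← hkp, ← hkq]; exact hprod
      have hint : kp * kq < 4 := by exact_mod_cast this
      have hkp2 : 2 ≤ kp := by
        have : (2:ℝ) ≤ (kp:ℝ) := by rw [← hkp]; exact hp2
        exact_mod_cast this
      have : kq = 1 := by nlinarith
      rw [hkq, this]
      norm_num
    have hsi := simple_ipsq_pos P i
    have hkey : 2 * ip b (P.simple i) = ip b b := by
      rw [pairing_def] at hq1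
      have : 2 * ip (P.simple i) b = ip b b := by
        field_simp at hq1
        linarith
      rw [ip_comm]
      exact this
    have hlenb : ip b b = pairing b (P.simple i) * ip (P.simple i) (P.simple i) := by
      rw [pairing_def]
      field_simp
      linarith
    -- pairing ϖ b = 1 gives 2 ⟨ϖ, b⟩ = ⟨b, b⟩
    have hwb : 2 * ip ϖ b = ip b b := by
      rw [pairing_def] at hbw
      field_simp at hbw
      linarith
    have hδpos : b - P.simple i ∈ P.pos := sub_simple_pos P hbpos hipbi hnp
    have hδΦ := pos_root_mem P hδpos
    have hδlen : ip (b - P.simple i) (b - P.simple i) = ip (P.simple i) (P.simple i) := by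
      rw [ip_sub_left, ip_sub_right, ip_sub_right, ip_comm (P.simple i) b]
      linarith
    have hδw : pairing ϖ (b - P.simple i) = pairing b (P.simple i) - 1 := by
      rw [pairing_def, hδlen, ip_sub_right, ip_w_simple_i P hf,
        div_eq_iff (ne_of_gt hsi)]
      linear_combination hwb + hlenb
    -- by the minuscule bound, p' = 2
    have hp'2 : pairing b (P.simple i) = 2 := by
      rcases pairing_w_mem P hf hm hδpos with h | h
      · rw [hδw] at h
        linarith
      · rw [hδw] at h
        linarith
    have hδw1 : pairing ϖ (b - P.simple i) = 1 := by rw [hδw, hp'2]; norm_num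
    have hδlay1 : b - P.simple i ∈ lay1 P ϖ := (mem_lay1 P).mpr ⟨hδpos, hδw1⟩
    -- coroot identity : coroot δ = 2 • coroot b - coroot (s i)
    have hbb2 : ip b b = 2 * ip (P.simple i) (P.simple i) := by
      rw [hlenb, hp'2]
    have hcb : (2:ℝ) • coroot b = (2 / ip (P.simple i) (P.simple i)) • b := by
      rw [coroot_def, hbb2, smul_smul]
      congr 1
      have hs0 : ip (P.simple i) (P.simple i) ≠ 0 := ne_of_gt hsi
      field_simp
    have hcoroot : coroot (b - P.simple i)
        = (2:ℝ) • coroot b - coroot (P.simple i) := by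
      rw [hcb, coroot_def, coroot_def, hδlen, smul_sub]
    have hδht : pairing P.rho (b - P.simple i) = 2 * (K:ℝ) - 1 := by
      rw [← ip_coroot, hcoroot, ip_sub_right, ip_smul_right, ip_coroot, ip_coroot,
        hbht, pairing_rho_simple]
    have hδhtN : htN P (b - P.simple i) = 2 * K - 1 := by
      apply htN_eq P hδpos
      rw [hδht]
      push_cast [Nat.cast_sub (by omega : 1 ≤ 2 * K)]
      ring
    have hle := hβmmax _ hδlay1
    rw [hδhtN] at hle
    omega

end MinusculeAux

open MinusculeAux

/-- For each `1 ≤ k ≤ h - 1` there is at least one positive root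
`α ∈ R⁺ \ Rᵢ⁺` with `⟨ρ, α∨⟩ = k`, where `ϖᵢ` is a minuscule fundamental weight. -/
theorem exists_posRoot_outside_parabolic_of_height
    {n : ℕ} (hn : 1 ≤ n) (P : RootSystemData n) (i : Fin n) (ϖ : EV n)
    (hϖ : P.MinusculeFundWeight i ϖ) :
    ∀ k : ℕ, 1 ≤ k → k ≤ P.cox - 1 →
      ∃ α ∈ P.pos, α ∉ P.posIn i ∧ pairing P.rho α = (k : ℝ) := by
  classical
  obtain ⟨hf, hm⟩ := hϖ
  intro k hk1 hk2
  set t := ip ϖ (Sm P ϖ) / ip ϖ ϖ with htdef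
  have ht : Sm P ϖ = t • ϖ := Sm_eq_smul P hf
  have hcard : (P.Φ.card : ℝ) = n * t := card_eq_nt P hn hf hm ht
  obtain ⟨βm, hβm, hβmmax⟩ := Finset.exists_max_image (lay1 P ϖ) (htN P)
    (lay1_nonempty P hf)
  set M := htN P βm with hM
  obtain ⟨v, hv1, hv2⟩ := exists_v P hf hm ht
  have hβmpos := ((mem_lay1 P).mp hβm).1
  -- t = M + 1
  have hvβm := hv1 βm hβm
  have hvβmpos := ((mem_lay1 P).mp hvβm).1
  have e1 : pairing P.rho (v βm) = t - (M : ℝ) := by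
    rw [hv2 βm hβm, (htN_spec P hβmpos).2]
  have e1' : (htN P (v βm) : ℝ) = t - (M : ℝ) := by
    rw [← (htN_spec P hvβmpos).2, e1]
  have h1 : (1 : ℝ) ≤ t - (M : ℝ) := by
    have h := (htN_spec P hvβmpos).1
    calc (1:ℝ) ≤ (htN P (v βm) : ℝ) := by exact_mod_cast h
      _ = t - (M : ℝ) := e1'
  have hsi1 := simple_i_mem_lay1 P hf
  have hvsi := hv1 _ hsi1
  have hvsipos := ((mem_lay1 P).mp hvsi).1
  have e2 : pairing P.rho (v (P.simple i)) = t - 1 := by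
    rw [hv2 _ hsi1, pairing_rho_simple]
  have e2' : (htN P (v (P.simple i)) : ℝ) = t - 1 := by
    rw [← (htN_spec P hvsipos).2, e2]
  have h2 : t - 1 ≤ (M : ℝ) := by
    have h := hβmmax _ hvsi
    calc t - 1 = (htN P (v (P.simple i)) : ℝ) := e2'.symm
      _ ≤ (M : ℝ) := by exact_mod_cast h
  have htM : t = (M : ℝ) + 1 := by linarith
  -- the Coxeter number
  have hcardN : P.Φ.card = n * (M + 1) := by
    have : (P.Φ.card : ℝ) = ((n * (M + 1) : ℕ) : ℝ) := by
      rw [hcard, htM]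
      push_cast
      ring
    exact_mod_cast this
  have hcox : P.cox = M + 1 := by
    unfold RootSystemData.cox
    rw [hcardN]
    exact Nat.mul_div_cancel_left _ (by omega)
  have hkM : k ≤ M := by
    rw [hcox] at hk2
    omega
  obtain ⟨β, hβ, hβht⟩ := interval_property P hf hm ht hβm hβmmax htM k hk1 hkM
  have hβpos := ((mem_lay1 P).mp hβ).1
  refine ⟨β, hβpos, ?_, ?_⟩
  · refine not_posIn_of_pairing_w_ne P hf ?_ (pos_root_mem P hβpos)
    rw [((mem_lay1 P).mp hβ).2]
    norm_num
  · rw [(htN_spec P hβpos).2, hβht]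
end
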